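/- Let J_1 ⊆ 𝒜_{m_1} and J_2 ⊆ 𝒜_{m_2} be proper ideals. Then the product ideal J_1 ⊞ J_2 ⊆ 𝒜_{m_1+m_2} is proper and its Thom–Boardman symbol is the entrywise sum of those of the factors: for every p ≥ 1, TB(J_1 ⊞ J_2)_p = TB(J_1)_p + TB(J_2)_p. -/

import Mathlib

open MvPowerSeries

/-- `𝒜 m` : formal power series in `m` variables over `ℂ`, the algebraic model for the
local ring of germs of differentiable functions at the origin of `ℂ^m`. -/
abbrev Amod (m : ℕ) : Type := MvPowerSeries (Fin m) ℂ

/-- Formal partial derivative `∂/∂x_j` of a multivariate power series. -/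
noncomputable def pd {m : ℕ} (j : Fin m) (φ : Amod m) : Amod m :=
  fun e => ((e j + 1 : ℕ) : ℂ) * MvPowerSeries.coeff (e + Finsupp.single j 1) φ

/-- The differential at the origin: the vector of degree-one coefficients. -/
noncomputable def diffAtZero {m : ℕ} (φ : Amod m) : Fin m → ℂ :=
  fun j => MvPowerSeries.coeff (Finsupp.single j 1) φ

/-- The rank of an ideal `B ⊆ 𝒜 m`: the dimension of the `ℂ`-linear span of the
differentials at `0` of the elements of `B`. -/
noncomputable def rankIdeal {m : ℕ} (B : Ideal (Amod m)) : ℕ :=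
  Module.finrank ℂ (Submodule.span ℂ (diffAtZero '' (B : Set (Amod m))))

/-- The corank of an ideal `B ⊆ 𝒜 m`. -/
noncomputable def corankIdeal {m : ℕ} (B : Ideal (Amod m)) : ℕ := m - rankIdeal B

/-- The Jacobian extension `Δ_k B` (lower index): the ideal generated by `B` together with
all `k × k` minors of Jacobian matrices of `k`-tuples of elements of `B`; for `k > m` it
is `B` itself. -/
noncomputable def jacExt {m : ℕ} (k : ℕ) (B : Ideal (Amod m)) : Ideal (Amod m) :=
  if m < k then B
  else B ⊔ Ideal.span { f | ∃ φ : Fin k → Amod m, (∀ i, φ i ∈ B) ∧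
    ∃ j : Fin k → Fin m, StrictMono j ∧
      f = Matrix.det (Matrix.of fun i l => pd (j l) (φ i)) }

/-- Jacobian extension with upper index: `Δ^i B = Δ_{m-i+1} B`. -/
noncomputable def jacExtUpper {m : ℕ} (i : ℕ) (B : Ideal (Amod m)) : Ideal (Amod m) :=
  jacExt (m - i + 1) B

/-- The iterated critical extensions `TBiter J p = Δ^{i_p} ⋯ Δ^{i_1} J`. -/
noncomputable def TBiter {m : ℕ} (J : Ideal (Amod m)) : ℕ → Ideal (Amod m)
  | 0 => J
  | p + 1 => jacExtUpper (corankIdeal (TBiter J p)) (TBiter J p)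

/-- The Thom–Boardman symbol, `0`-indexed: `TB J p` is the `(p+1)`-st entry `i_{p+1}`,
i.e. `TB J 0 = corank J` and `TB J p = corank (Δ^{i_p} ⋯ Δ^{i_1} J)`. -/
noncomputable def TB {m : ℕ} (J : Ideal (Amod m)) (p : ℕ) : ℕ :=
  corankIdeal (TBiter J p)

/-- Coefficient `a_i` of the generic monic polynomial of degree `n`
(the first block of `n` variables of `𝒜 (n+r)`), with `a_n = 1` and `a_i = 0` for `i > n`. -/
noncomputable def aCoef (n r i : ℕ) : Amod (n + r) :=
  if h : i < n then MvPowerSeries.X (Fin.castAdd r ⟨i, h⟩)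
  else if i = n then 1 else 0

/-- Coefficient `b_j` of the generic monic polynomial of degree `r`
(the last block of `r` variables of `𝒜 (n+r)`), with `b_r = 1` and `b_j = 0` for `j > r`. -/
noncomputable def bCoef (n r j : ℕ) : Amod (n + r) :=
  if h : j < r then MvPowerSeries.X (Fin.natAdd n ⟨j, h⟩)
  else if j = r then 1 else 0

/-- Coefficient `c_k` of the product `(x^n + Σ_{i<n} a_i x^i) (x^r + Σ_{j<r} b_j x^j)`. -/
noncomputable def cCoef (n r k : ℕ) : Amod (n + r) :=
  ∑ p ∈ Finset.HasAntidiagonal.antidiagonal k, aCoef n r p.1 * bCoef n r p.2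

/-- The ideal `I(μ_{n,r}) ⊆ 𝒜 (n+r)` of the polynomial multiplication map `μ_{n,r}`,
generated by `c_0, …, c_{n+r-1}`. -/
noncomputable def muIdeal (n r : ℕ) : Ideal (Amod (n + r)) :=
  Ideal.span (Set.range fun k : Fin (n + r) => cCoef n r (k : ℕ))

/-- The sequence `I(n,r)` given by the Euclidean algorithm on `n` and `r` (0-indexed):
`r` repeated `n / r` times, then `r₁ = n % r` repeated `r / r₁` times, …, followed by zeros. -/
def euclidSeq (n r p : ℕ) : ℕ :=
  if h : r = 0 then 0
  else if p < n / r then r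
  else euclidSeq r (n % r) (p - n / r)
termination_by r
decreasing_by exact Nat.mod_lt _ (Nat.pos_of_ne_zero h)

/-- The `ℂ`-algebra embedding `𝒜 m₁ → 𝒜 (m₁+m₂)` using the first `m₁` variables. -/
noncomputable def embL {m₁ m₂ : ℕ} (φ : Amod m₁) : Amod (m₁ + m₂) :=
  fun e =>
    if ∀ j : Fin m₂, e (Fin.natAdd m₁ j) = 0 then
      MvPowerSeries.coeff (Finsupp.equivFunOnFinite.symm fun i => e (Fin.castAdd m₂ i)) φ
    else 0

/-- The `ℂ`-algebra embedding `𝒜 m₂ → 𝒜 (m₁+m₂)` using the last `m₂` variables. -/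
noncomputable def embR {m₁ m₂ : ℕ} (φ : Amod m₂) : Amod (m₁ + m₂) :=
  fun e =>
    if ∀ i : Fin m₁, e (Fin.castAdd m₂ i) = 0 then
      MvPowerSeries.coeff (Finsupp.equivFunOnFinite.symm fun j => e (Fin.natAdd m₁ j)) φ
    else 0

/-- The product ideal `J₁ ⊞ J₂ ⊆ 𝒜 (m₁+m₂)`, generated by the images of `J₁` and `J₂`
under the two embeddings; it models the ideal of the Cartesian product of two map-germs. -/
noncomputable def prodIdeal {m₁ m₂ : ℕ} (J₁ : Ideal (Amod m₁)) (J₂ : Ideal (Amod m₂)) :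
    Ideal (Amod (m₁ + m₂)) :=
  Ideal.span (embL '' (J₁ : Set (Amod m₁)) ∪ embR '' (J₂ : Set (Amod m₂)))

section PDCalc

variable {m : ℕ}

lemma pd_coeff (j : Fin m) (φ : Amod m) (e : Fin m →₀ ℕ) :
    MvPowerSeries.coeff e (pd j φ) =
      ((e j + 1 : ℕ) : ℂ) * MvPowerSeries.coeff (e + Finsupp.single j 1) φ := rfl

lemma pd_add (j : Fin m) (u v : Amod m) : pd j (u + v) = pd j u + pd j v := by
  apply MvPowerSeries.ext; intro e
  rw [map_add, pd_coeff, pd_coeff, pd_coeff, map_add]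
  ring

lemma sum_shift₁ (j : Fin m) (e : Fin m →₀ ℕ) (F : (Fin m →₀ ℕ) → (Fin m →₀ ℕ) → ℂ) :
    ∑ pq ∈ Finset.HasAntidiagonal.antidiagonal e, ((pq.1 j + 1 : ℕ) : ℂ) * F (pq.1 + Finsupp.single j 1) pq.2
      = ∑ PQ ∈ Finset.HasAntidiagonal.antidiagonal (e + Finsupp.single j 1),
          (fun PQ : (Fin m →₀ ℕ) × (Fin m →₀ ℕ) => ((PQ.1 j : ℕ) : ℂ) * F PQ.1 PQ.2) PQ := by
  classical
  have hfil : ∑ PQ ∈ Finset.HasAntidiagonal.antidiagonal (e + Finsupp.single j 1),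
      (fun PQ : (Fin m →₀ ℕ) × (Fin m →₀ ℕ) => ((PQ.1 j : ℕ) : ℂ) * F PQ.1 PQ.2) PQ
      = ∑ PQ ∈ (Finset.HasAntidiagonal.antidiagonal (e + Finsupp.single j 1)).filter
          (fun PQ : (Fin m →₀ ℕ) × (Fin m →₀ ℕ) => PQ.1 j ≠ 0),
          (fun PQ : (Fin m →₀ ℕ) × (Fin m →₀ ℕ) => ((PQ.1 j : ℕ) : ℂ) * F PQ.1 PQ.2) PQ := by
    refine (Finset.sum_filter_of_ne ?_).symm
    intro x _ hx h0
    apply hx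
    rw [h0]
    norm_num
  rw [hfil]
  refine Finset.sum_nbij' (i := fun pq : (Fin m →₀ ℕ) × (Fin m →₀ ℕ) =>
      (pq.1 + Finsupp.single j 1, pq.2))
    (j := fun PQ : (Fin m →₀ ℕ) × (Fin m →₀ ℕ) => (PQ.1 - Finsupp.single j 1, PQ.2))
    ?_ ?_ ?_ ?_ ?_
  · intro a ha
    rw [Finset.HasAntidiagonal.mem_antidiagonal] at ha
    simp only [Finset.mem_filter, Finset.HasAntidiagonal.mem_antidiagonal]
    refine ⟨by rw [← ha]; exact add_right_comm _ _ _, ?_⟩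
    simp [Finsupp.add_apply, Finsupp.single_eq_same]
  · intro a ha
    simp only [Finset.mem_filter, Finset.HasAntidiagonal.mem_antidiagonal] at ha
    obtain ⟨hsum, hne⟩ := ha
    have hle : Finsupp.single j 1 ≤ a.1 := by
      rw [Finsupp.single_le_iff]; omega
    rw [Finset.HasAntidiagonal.mem_antidiagonal]
    have h1 : a.1 - Finsupp.single j 1 + Finsupp.single j 1 = a.1 := tsub_add_cancel_of_le hle
    have h2 : a.1 - Finsupp.single j 1 + Finsupp.single j 1 + a.2 = e + Finsupp.single j 1 := by
      rw [h1, hsum]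
    have h3 : a.1 - Finsupp.single j 1 + a.2 + Finsupp.single j 1 = e + Finsupp.single j 1 := by
      rw [← h2]; exact add_right_comm _ _ _
    exact add_right_cancel h3
  · intro a _
    simp [add_tsub_cancel_right]
  · intro a ha
    simp only [Finset.mem_filter, Finset.HasAntidiagonal.mem_antidiagonal] at ha
    have hle : Finsupp.single j 1 ≤ a.1 := by
      rw [Finsupp.single_le_iff]; omega
    simp [tsub_add_cancel_of_le hle]
  · intro a _
    simp only
    have h4 : (a.1 + Finsupp.single j 1 : Fin m →₀ ℕ) j = a.1 j + 1 := by
      simp [Finsupp.add_apply, Finsupp.single_eq_same]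
    rw [h4]

lemma sum_shift₂ (j : Fin m) (e : Fin m →₀ ℕ) (F : (Fin m →₀ ℕ) → (Fin m →₀ ℕ) → ℂ) :
    ∑ pq ∈ Finset.HasAntidiagonal.antidiagonal e, ((pq.2 j + 1 : ℕ) : ℂ) * F pq.1 (pq.2 + Finsupp.single j 1)
      = ∑ PQ ∈ Finset.HasAntidiagonal.antidiagonal (e + Finsupp.single j 1),
          (fun PQ : (Fin m →₀ ℕ) × (Fin m →₀ ℕ) => ((PQ.2 j : ℕ) : ℂ) * F PQ.1 PQ.2) PQ := by
  classical
  have hfil : ∑ PQ ∈ Finset.HasAntidiagonal.antidiagonal (e + Finsupp.single j 1),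
      (fun PQ : (Fin m →₀ ℕ) × (Fin m →₀ ℕ) => ((PQ.2 j : ℕ) : ℂ) * F PQ.1 PQ.2) PQ
      = ∑ PQ ∈ (Finset.HasAntidiagonal.antidiagonal (e + Finsupp.single j 1)).filter
          (fun PQ : (Fin m →₀ ℕ) × (Fin m →₀ ℕ) => PQ.2 j ≠ 0),
          (fun PQ : (Fin m →₀ ℕ) × (Fin m →₀ ℕ) => ((PQ.2 j : ℕ) : ℂ) * F PQ.1 PQ.2) PQ := by
    refine (Finset.sum_filter_of_ne ?_).symm
    intro x _ hx h0
    apply hx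
    rw [h0]
    norm_num
  rw [hfil]
  refine Finset.sum_nbij' (i := fun pq : (Fin m →₀ ℕ) × (Fin m →₀ ℕ) =>
      (pq.1, pq.2 + Finsupp.single j 1))
    (j := fun PQ : (Fin m →₀ ℕ) × (Fin m →₀ ℕ) => (PQ.1, PQ.2 - Finsupp.single j 1))
    ?_ ?_ ?_ ?_ ?_
  · intro a ha
    rw [Finset.HasAntidiagonal.mem_antidiagonal] at ha
    simp only [Finset.mem_filter, Finset.HasAntidiagonal.mem_antidiagonal]
    refine ⟨by rw [← ha]; exact (add_assoc _ _ _).symm, ?_⟩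
    simp [Finsupp.add_apply, Finsupp.single_eq_same]
  · intro a ha
    simp only [Finset.mem_filter, Finset.HasAntidiagonal.mem_antidiagonal] at ha
    obtain ⟨hsum, hne⟩ := ha
    have hle : Finsupp.single j 1 ≤ a.2 := by
      rw [Finsupp.single_le_iff]; omega
    rw [Finset.HasAntidiagonal.mem_antidiagonal]
    have h1 : a.2 - Finsupp.single j 1 + Finsupp.single j 1 = a.2 := tsub_add_cancel_of_le hle
    have h3 : a.1 + (a.2 - Finsupp.single j 1) + Finsupp.single j 1 = e + Finsupp.single j 1 := by
      rw [add_assoc, h1, hsum]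
    exact add_right_cancel h3
  · intro a _
    simp [add_tsub_cancel_right]
  · intro a ha
    simp only [Finset.mem_filter, Finset.HasAntidiagonal.mem_antidiagonal] at ha
    have hle : Finsupp.single j 1 ≤ a.2 := by
      rw [Finsupp.single_le_iff]; omega
    simp [tsub_add_cancel_of_le hle]
  · intro a _
    simp only
    have h4 : (a.2 + Finsupp.single j 1 : Fin m →₀ ℕ) j = a.2 j + 1 := by
      simp [Finsupp.add_apply, Finsupp.single_eq_same]
    rw [h4]


lemma pd_mul (j : Fin m) (u v : Amod m) : pd j (u * v) = pd j u * v + u * pd j v := by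
  classical
  apply MvPowerSeries.ext; intro e
  rw [map_add, pd_coeff, MvPowerSeries.coeff_mul, MvPowerSeries.coeff_mul,
    MvPowerSeries.coeff_mul]
  have h1 : ∑ pq ∈ Finset.HasAntidiagonal.antidiagonal e,
      MvPowerSeries.coeff pq.1 (pd j u) * MvPowerSeries.coeff pq.2 v
      = ∑ PQ ∈ Finset.HasAntidiagonal.antidiagonal (e + Finsupp.single j 1),
          (fun PQ : (Fin m →₀ ℕ) × (Fin m →₀ ℕ) => ((PQ.1 j : ℕ) : ℂ) *
            (MvPowerSeries.coeff PQ.1 u * MvPowerSeries.coeff PQ.2 v)) PQ := by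
    rw [← sum_shift₁ j e (fun P Q => MvPowerSeries.coeff P u * MvPowerSeries.coeff Q v)]
    refine Finset.sum_congr rfl fun pq _ => ?_
    rw [pd_coeff]; ring
  have h2 : ∑ pq ∈ Finset.HasAntidiagonal.antidiagonal e,
      MvPowerSeries.coeff pq.1 u * MvPowerSeries.coeff pq.2 (pd j v)
      = ∑ PQ ∈ Finset.HasAntidiagonal.antidiagonal (e + Finsupp.single j 1),
          (fun PQ : (Fin m →₀ ℕ) × (Fin m →₀ ℕ) => ((PQ.2 j : ℕ) : ℂ) *
            (MvPowerSeries.coeff PQ.1 u * MvPowerSeries.coeff PQ.2 v)) PQ := by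
    rw [← sum_shift₂ j e (fun P Q => MvPowerSeries.coeff P u * MvPowerSeries.coeff Q v)]
    refine Finset.sum_congr rfl fun pq _ => ?_
    rw [pd_coeff]; ring
  rw [h1, h2, ← Finset.sum_add_distrib, Finset.mul_sum]
  refine Finset.sum_congr rfl fun PQ hPQ => ?_
  rw [Finset.HasAntidiagonal.mem_antidiagonal] at hPQ
  have hj : PQ.1 j + PQ.2 j = e j + 1 := by
    have h5 := congrArg (fun z : Fin m →₀ ℕ => z j) hPQ
    simpa [Finsupp.add_apply, Finsupp.single_eq_same] using h5
  have h6 : ((PQ.1 j : ℕ) : ℂ) + ((PQ.2 j : ℕ) : ℂ) = ((e j + 1 : ℕ) : ℂ) := by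
    rw [← Nat.cast_add, hj]
  rw [← add_mul, h6]

lemma constantCoeff_pd (j : Fin m) (φ : Amod m) :
    MvPowerSeries.constantCoeff (pd j φ) = diffAtZero φ j := by
  rw [← MvPowerSeries.coeff_zero_eq_constantCoeff_apply, pd_coeff]
  simp [diffAtZero]

lemma diffAtZero_add (u v : Amod m) : diffAtZero (u + v) = diffAtZero u + diffAtZero v := by
  funext j; simp [diffAtZero, map_add]

lemma diffAtZero_mul (u v : Amod m) :
    diffAtZero (u * v) = (MvPowerSeries.constantCoeff u) • diffAtZero v
      + (MvPowerSeries.constantCoeff v) • diffAtZero u := by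
  funext j
  have : diffAtZero (u * v) j = MvPowerSeries.constantCoeff (pd j (u * v)) :=
    (constantCoeff_pd j _).symm
  rw [this, pd_mul, map_add, map_mul, map_mul, constantCoeff_pd, constantCoeff_pd]
  simp [Pi.add_apply, Pi.smul_apply, smul_eq_mul]
  ring

end PDCalc


section Emb

variable {m₁ m₂ : ℕ}

lemma castAdd_ne_natAdd (i : Fin m₁) (j : Fin m₂) :
    Fin.castAdd m₂ i ≠ Fin.natAdd m₁ j := by
  intro h
  have := congrArg Fin.val h
  simp only [Fin.coe_castAdd, Fin.coe_natAdd] at this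
  omega

noncomputable def iotaL (a : Fin m₁ →₀ ℕ) : Fin (m₁ + m₂) →₀ ℕ :=
  Finsupp.equivFunOnFinite.symm (Fin.addCases (fun i => a i) (fun _ => 0))

noncomputable def iotaR (b : Fin m₂ →₀ ℕ) : Fin (m₁ + m₂) →₀ ℕ :=
  Finsupp.equivFunOnFinite.symm (Fin.addCases (fun _ => 0) (fun i => b i))

noncomputable def rhoL (e : Fin (m₁ + m₂) →₀ ℕ) : Fin m₁ →₀ ℕ :=
  Finsupp.equivFunOnFinite.symm (fun i => e (Fin.castAdd m₂ i))

noncomputable def rhoR (e : Fin (m₁ + m₂) →₀ ℕ) : Fin m₂ →₀ ℕ :=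
  Finsupp.equivFunOnFinite.symm (fun i => e (Fin.natAdd m₁ i))

lemma equivFunOnFinite_symm_apply {α : Type*} [Finite α] (f : α → ℕ) (x : α) :
    (Finsupp.equivFunOnFinite.symm f) x = f x := by
  rw [← Finsupp.equivFunOnFinite_apply, Equiv.apply_symm_apply]

@[simp] lemma iotaL_castAdd (a : Fin m₁ →₀ ℕ) (i : Fin m₁) :
    iotaL (m₂ := m₂) a (Fin.castAdd m₂ i) = a i := by
  rw [iotaL, equivFunOnFinite_symm_apply, Fin.addCases_left]

@[simp] lemma iotaL_natAdd (a : Fin m₁ →₀ ℕ) (j : Fin m₂) :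
    iotaL (m₂ := m₂) a (Fin.natAdd m₁ j) = 0 := by
  rw [iotaL, equivFunOnFinite_symm_apply, Fin.addCases_right]

@[simp] lemma iotaR_castAdd (b : Fin m₂ →₀ ℕ) (i : Fin m₁) :
    iotaR (m₁ := m₁) b (Fin.castAdd m₂ i) = 0 := by
  rw [iotaR, equivFunOnFinite_symm_apply, Fin.addCases_left]

@[simp] lemma iotaR_natAdd (b : Fin m₂ →₀ ℕ) (j : Fin m₂) :
    iotaR (m₁ := m₁) b (Fin.natAdd m₁ j) = b j := by
  rw [iotaR, equivFunOnFinite_symm_apply, Fin.addCases_right]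

@[simp] lemma rhoL_apply (e : Fin (m₁ + m₂) →₀ ℕ) (i : Fin m₁) :
    rhoL e i = e (Fin.castAdd m₂ i) := equivFunOnFinite_symm_apply _ _

@[simp] lemma rhoR_apply (e : Fin (m₁ + m₂) →₀ ℕ) (j : Fin m₂) :
    rhoR e j = e (Fin.natAdd m₁ j) := equivFunOnFinite_symm_apply _ _

@[simp] lemma rhoL_iotaL (a : Fin m₁ →₀ ℕ) : rhoL (iotaL (m₂ := m₂) a) = a := by
  ext i; simp

@[simp] lemma rhoR_iotaR (b : Fin m₂ →₀ ℕ) : rhoR (iotaR (m₁ := m₁) b) = b := by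
  ext j; simp

lemma iotaL_rhoL {e : Fin (m₁ + m₂) →₀ ℕ} (h : ∀ j : Fin m₂, e (Fin.natAdd m₁ j) = 0) :
    iotaL (rhoL e) = e := by
  ext x
  induction x using Fin.addCases with
  | left i => simp
  | right j => simp [h j]

lemma iotaR_rhoR {e : Fin (m₁ + m₂) →₀ ℕ} (h : ∀ i : Fin m₁, e (Fin.castAdd m₂ i) = 0) :
    iotaR (rhoR e) = e := by
  ext x
  induction x using Fin.addCases with
  | left i => simp [h i]
  | right j => simp

lemma iotaL_add (a b : Fin m₁ →₀ ℕ) :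
    iotaL (m₂ := m₂) (a + b) = iotaL a + iotaL b := by
  ext x
  induction x using Fin.addCases with
  | left i => simp [Finsupp.add_apply]
  | right j => simp [Finsupp.add_apply]

lemma iotaR_add (a b : Fin m₂ →₀ ℕ) :
    iotaR (m₁ := m₁) (a + b) = iotaR a + iotaR b := by
  ext x
  induction x using Fin.addCases with
  | left i => simp [Finsupp.add_apply]
  | right j => simp [Finsupp.add_apply]

lemma rhoL_add (a b : Fin (m₁ + m₂) →₀ ℕ) : rhoL (a + b) = rhoL a + rhoL b := by
  ext i; simp [Finsupp.add_apply]

lemma rhoR_add (a b : Fin (m₁ + m₂) →₀ ℕ) : rhoR (a + b) = rhoR a + rhoR b := by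
  ext j; simp [Finsupp.add_apply]

@[simp] lemma iotaL_zero : iotaL (m₂ := m₂) (0 : Fin m₁ →₀ ℕ) = 0 := by
  ext x
  induction x using Fin.addCases with
  | left i => simp
  | right j => simp

@[simp] lemma iotaR_zero : iotaR (m₁ := m₁) (0 : Fin m₂ →₀ ℕ) = 0 := by
  ext x
  induction x using Fin.addCases with
  | left i => simp
  | right j => simp

lemma iotaL_eq_zero_iff {a : Fin m₁ →₀ ℕ} : iotaL (m₂ := m₂) a = 0 ↔ a = 0 := by
  constructor
  · intro h
    ext i
    have := congrArg (fun z => rhoL z i) h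
    simpa using this
  · rintro rfl; simp

lemma iotaR_eq_zero_iff {b : Fin m₂ →₀ ℕ} : iotaR (m₁ := m₁) b = 0 ↔ b = 0 := by
  constructor
  · intro h
    ext j
    have := congrArg (fun z => rhoR z j) h
    simpa using this
  · rintro rfl; simp

lemma iotaL_single (i : Fin m₁) :
    Finsupp.single (Fin.castAdd m₂ i) 1 = iotaL (Finsupp.single i 1) := by
  ext x
  induction x using Fin.addCases with
  | left i' =>
      rw [iotaL_castAdd, Finsupp.single_apply, Finsupp.single_apply]
      by_cases h : i = i'
      · subst h; simp
      · rw [if_neg h, if_neg (fun hc => h ((Fin.castAdd_injective m₁ m₂) hc))]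
  | right j =>
      rw [iotaL_natAdd, Finsupp.single_apply, if_neg (castAdd_ne_natAdd i j)]

lemma iotaR_single (j : Fin m₂) :
    Finsupp.single (Fin.natAdd m₁ j) 1 = iotaR (Finsupp.single j 1) := by
  ext x
  induction x using Fin.addCases with
  | left i =>
      rw [iotaR_castAdd, Finsupp.single_apply, if_neg (castAdd_ne_natAdd i j).symm]
  | right j' =>
      rw [iotaR_natAdd, Finsupp.single_apply, Finsupp.single_apply]
      by_cases h : j = j'
      · subst h; simp
      · rw [if_neg h, if_neg ?_]
        intro hc
        exact h (by
          have := congrArg Fin.val hc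
          simp only [Fin.coe_natAdd] at this
          exact Fin.ext (by omega))

@[simp] lemma rhoL_zero : rhoL (0 : Fin (m₁ + m₂) →₀ ℕ) = 0 := by ext i; simp

@[simp] lemma rhoR_zero : rhoR (0 : Fin (m₁ + m₂) →₀ ℕ) = 0 := by ext j; simp

/-- The "second block vanishes" condition. -/
abbrev condL (e : Fin (m₁ + m₂) →₀ ℕ) : Prop := ∀ j : Fin m₂, e (Fin.natAdd m₁ j) = 0

abbrev condR (e : Fin (m₁ + m₂) →₀ ℕ) : Prop := ∀ i : Fin m₁, e (Fin.castAdd m₂ i) = 0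

lemma condL_iotaL (a : Fin m₁ →₀ ℕ) : condL (iotaL (m₂ := m₂) a) := fun j => by simp

lemma condR_iotaR (b : Fin m₂ →₀ ℕ) : condR (iotaR (m₁ := m₁) b) := fun i => by simp

lemma condL_of_add {p q e : Fin (m₁ + m₂) →₀ ℕ} (h : p + q = e) (he : condL e) :
    condL p ∧ condL q := by
  constructor <;> intro j <;>
  · have h5 := congrArg (fun z : Fin (m₁ + m₂) →₀ ℕ => z (Fin.natAdd m₁ j)) h
    simp only [Finsupp.add_apply] at h5
    have := he j
    omega

lemma condR_of_add {p q e : Fin (m₁ + m₂) →₀ ℕ} (h : p + q = e) (he : condR e) :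
    condR p ∧ condR q := by
  constructor <;> intro i <;>
  · have h5 := congrArg (fun z : Fin (m₁ + m₂) →₀ ℕ => z (Fin.castAdd m₂ i)) h
    simp only [Finsupp.add_apply] at h5
    have := he i
    omega

lemma embL_coeff (φ : Amod m₁) (e : Fin (m₁ + m₂) →₀ ℕ) :
    MvPowerSeries.coeff e (embL (m₂ := m₂) φ) =
      if condL e then MvPowerSeries.coeff (rhoL e) φ else 0 := rfl

lemma embR_coeff (ψ : Amod m₂) (e : Fin (m₁ + m₂) →₀ ℕ) :
    MvPowerSeries.coeff e (embR (m₁ := m₁) ψ) =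
      if condR e then MvPowerSeries.coeff (rhoR e) ψ else 0 := rfl

lemma embL_coeff_iotaL (φ : Amod m₁) (a : Fin m₁ →₀ ℕ) :
    MvPowerSeries.coeff (iotaL (m₂ := m₂) a) (embL φ) = MvPowerSeries.coeff a φ := by
  rw [embL_coeff, if_pos (condL_iotaL a), rhoL_iotaL]

lemma embR_coeff_iotaR (ψ : Amod m₂) (b : Fin m₂ →₀ ℕ) :
    MvPowerSeries.coeff (iotaR (m₁ := m₁) b) (embR ψ) = MvPowerSeries.coeff b ψ := by
  rw [embR_coeff, if_pos (condR_iotaR b), rhoR_iotaR]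

end Emb


section EmbHom

variable {m₁ m₂ : ℕ}

lemma embL_sum_antidiagonal (u v : Amod m₁) (E : Fin m₁ →₀ ℕ) :
    ∑ pq ∈ Finset.HasAntidiagonal.antidiagonal (iotaL (m₂ := m₂) E),
        MvPowerSeries.coeff pq.1 (embL u) * MvPowerSeries.coeff pq.2 (embL v)
      = ∑ ab ∈ Finset.HasAntidiagonal.antidiagonal E,
          MvPowerSeries.coeff ab.1 u * MvPowerSeries.coeff ab.2 v := by
  classical
  refine Finset.sum_nbij'
    (i := fun pq : (Fin (m₁ + m₂) →₀ ℕ) × (Fin (m₁ + m₂) →₀ ℕ) => (rhoL pq.1, rhoL pq.2))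
    (j := fun ab : (Fin m₁ →₀ ℕ) × (Fin m₁ →₀ ℕ) => (iotaL ab.1, iotaL ab.2))
    ?_ ?_ ?_ ?_ ?_
  · intro a ha
    rw [Finset.HasAntidiagonal.mem_antidiagonal] at ha
    rw [Finset.HasAntidiagonal.mem_antidiagonal]
    have := congrArg rhoL ha
    rw [rhoL_add, rhoL_iotaL] at this
    exact this
  · intro a ha
    rw [Finset.HasAntidiagonal.mem_antidiagonal] at ha
    rw [Finset.HasAntidiagonal.mem_antidiagonal, ← iotaL_add, ha]
  · intro a ha
    rw [Finset.HasAntidiagonal.mem_antidiagonal] at ha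
    obtain ⟨h1, h2⟩ := condL_of_add ha (condL_iotaL E)
    exact Prod.ext (iotaL_rhoL h1) (iotaL_rhoL h2)
  · intro a _
    exact Prod.ext (rhoL_iotaL _) (rhoL_iotaL _)
  · intro a ha
    rw [Finset.HasAntidiagonal.mem_antidiagonal] at ha
    obtain ⟨h1, h2⟩ := condL_of_add ha (condL_iotaL E)
    simp only
    rw [embL_coeff, if_pos h1, embL_coeff, if_pos h2]

lemma embR_sum_antidiagonal (u v : Amod m₂) (E : Fin m₂ →₀ ℕ) :
    ∑ pq ∈ Finset.HasAntidiagonal.antidiagonal (iotaR (m₁ := m₁) E),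
        MvPowerSeries.coeff pq.1 (embR u) * MvPowerSeries.coeff pq.2 (embR v)
      = ∑ ab ∈ Finset.HasAntidiagonal.antidiagonal E,
          MvPowerSeries.coeff ab.1 u * MvPowerSeries.coeff ab.2 v := by
  classical
  refine Finset.sum_nbij'
    (i := fun pq : (Fin (m₁ + m₂) →₀ ℕ) × (Fin (m₁ + m₂) →₀ ℕ) => (rhoR pq.1, rhoR pq.2))
    (j := fun ab : (Fin m₂ →₀ ℕ) × (Fin m₂ →₀ ℕ) => (iotaR ab.1, iotaR ab.2))
    ?_ ?_ ?_ ?_ ?_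
  · intro a ha
    rw [Finset.HasAntidiagonal.mem_antidiagonal] at ha
    rw [Finset.HasAntidiagonal.mem_antidiagonal]
    have := congrArg rhoR ha
    rw [rhoR_add, rhoR_iotaR] at this
    exact this
  · intro a ha
    rw [Finset.HasAntidiagonal.mem_antidiagonal] at ha
    rw [Finset.HasAntidiagonal.mem_antidiagonal, ← iotaR_add, ha]
  · intro a ha
    rw [Finset.HasAntidiagonal.mem_antidiagonal] at ha
    obtain ⟨h1, h2⟩ := condR_of_add ha (condR_iotaR E)
    exact Prod.ext (iotaR_rhoR h1) (iotaR_rhoR h2)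
  · intro a _
    exact Prod.ext (rhoR_iotaR _) (rhoR_iotaR _)
  · intro a ha
    rw [Finset.HasAntidiagonal.mem_antidiagonal] at ha
    obtain ⟨h1, h2⟩ := condR_of_add ha (condR_iotaR E)
    simp only
    rw [embR_coeff, if_pos h1, embR_coeff, if_pos h2]

lemma embL_mul (u v : Amod m₁) : embL (m₂ := m₂) (u * v) = embL u * embL v := by
  classical
  apply MvPowerSeries.ext; intro e
  rw [MvPowerSeries.coeff_mul, embL_coeff]
  by_cases hc : condL e
  · rw [if_pos hc]
    have he : e = iotaL (rhoL e) := (iotaL_rhoL hc).symm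
    rw [MvPowerSeries.coeff_mul]
    conv_rhs => rw [he]
    rw [embL_sum_antidiagonal]
  · rw [if_neg hc]
    refine (Finset.sum_eq_zero fun pq hpq => ?_).symm
    rw [Finset.HasAntidiagonal.mem_antidiagonal] at hpq
    by_cases h1 : condL pq.1
    · have h2 : ¬ condL pq.2 := by
        intro h2
        apply hc
        intro j
        have := congrArg (fun z : Fin (m₁ + m₂) →₀ ℕ => z (Fin.natAdd m₁ j)) hpq
        simp only [Finsupp.add_apply] at this
        rw [h1 j, h2 j] at this
        omega
      rw [embL_coeff (e := pq.2), if_neg h2, mul_zero]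
    · rw [embL_coeff (e := pq.1), if_neg h1, zero_mul]

lemma embR_mul (u v : Amod m₂) : embR (m₁ := m₁) (u * v) = embR u * embR v := by
  classical
  apply MvPowerSeries.ext; intro e
  rw [MvPowerSeries.coeff_mul, embR_coeff]
  by_cases hc : condR e
  · rw [if_pos hc]
    have he : e = iotaR (rhoR e) := (iotaR_rhoR hc).symm
    rw [MvPowerSeries.coeff_mul]
    conv_rhs => rw [he]
    rw [embR_sum_antidiagonal]
  · rw [if_neg hc]
    refine (Finset.sum_eq_zero fun pq hpq => ?_).symm
    rw [Finset.HasAntidiagonal.mem_antidiagonal] at hpq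
    by_cases h1 : condR pq.1
    · have h2 : ¬ condR pq.2 := by
        intro h2
        apply hc
        intro i
        have := congrArg (fun z : Fin (m₁ + m₂) →₀ ℕ => z (Fin.castAdd m₂ i)) hpq
        simp only [Finsupp.add_apply] at this
        rw [h1 i, h2 i] at this
        omega
      rw [embR_coeff (e := pq.2), if_neg h2, mul_zero]
    · rw [embR_coeff (e := pq.1), if_neg h1, zero_mul]

lemma embL_add (u v : Amod m₁) : embL (m₂ := m₂) (u + v) = embL u + embL v := by
  apply MvPowerSeries.ext; intro e
  rw [map_add, embL_coeff, embL_coeff, embL_coeff, map_add]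
  by_cases hc : condL e
  · rw [if_pos hc, if_pos hc, if_pos hc]
  · rw [if_neg hc, if_neg hc, if_neg hc, add_zero]

lemma embR_add (u v : Amod m₂) : embR (m₁ := m₁) (u + v) = embR u + embR v := by
  apply MvPowerSeries.ext; intro e
  rw [map_add, embR_coeff, embR_coeff, embR_coeff, map_add]
  by_cases hc : condR e
  · rw [if_pos hc, if_pos hc, if_pos hc]
  · rw [if_neg hc, if_neg hc, if_neg hc, add_zero]

lemma embL_one : embL (m₂ := m₂) (1 : Amod m₁) = 1 := by
  classical
  apply MvPowerSeries.ext; intro e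
  rw [embL_coeff]
  by_cases hc : condL e
  · rw [if_pos hc, MvPowerSeries.coeff_one, MvPowerSeries.coeff_one]
    by_cases he : e = 0
    · subst he
      rw [if_pos rhoL_zero, if_pos rfl]
    · have hne : ¬ rhoL e = 0 := fun h0 => he (by rw [← iotaL_rhoL hc, h0, iotaL_zero])
      rw [if_neg hne, if_neg he]
  · have hne : ¬ e = 0 := fun h0 => hc (by rw [h0]; intro j; rfl)
    rw [if_neg hc, MvPowerSeries.coeff_one, if_neg hne]

lemma embR_one : embR (m₁ := m₁) (1 : Amod m₂) = 1 := by
  classical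
  apply MvPowerSeries.ext; intro e
  rw [embR_coeff]
  by_cases hc : condR e
  · rw [if_pos hc, MvPowerSeries.coeff_one, MvPowerSeries.coeff_one]
    by_cases he : e = 0
    · subst he
      rw [if_pos rhoR_zero, if_pos rfl]
    · have hne : ¬ rhoR e = 0 := fun h0 => he (by rw [← iotaR_rhoR hc, h0, iotaR_zero])
      rw [if_neg hne, if_neg he]
  · have hne : ¬ e = 0 := fun h0 => hc (by rw [h0]; intro i; rfl)
    rw [if_neg hc, MvPowerSeries.coeff_one, if_neg hne]

lemma embL_zero : embL (m₂ := m₂) (0 : Amod m₁) = 0 := by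
  apply MvPowerSeries.ext; intro e
  rw [embL_coeff, map_zero]
  split <;> simp

lemma embR_zero : embR (m₁ := m₁) (0 : Amod m₂) = 0 := by
  apply MvPowerSeries.ext; intro e
  rw [embR_coeff, map_zero]
  split <;> simp

/-- `embL` as a ring homomorphism. -/
noncomputable def embLh (m₁ m₂ : ℕ) : Amod m₁ →+* Amod (m₁ + m₂) where
  toFun := embL
  map_one' := embL_one
  map_mul' := embL_mul
  map_zero' := embL_zero
  map_add' := embL_add

/-- `embR` as a ring homomorphism. -/
noncomputable def embRh (m₁ m₂ : ℕ) : Amod m₂ →+* Amod (m₁ + m₂) where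
  toFun := embR
  map_one' := embR_one
  map_mul' := embR_mul
  map_zero' := embR_zero
  map_add' := embR_add

@[simp] lemma embLh_apply (φ : Amod m₁) : embLh m₁ m₂ φ = embL φ := rfl

@[simp] lemma embRh_apply (ψ : Amod m₂) : embRh m₁ m₂ ψ = embR ψ := rfl

lemma pd_castAdd_embL (j : Fin m₁) (φ : Amod m₁) :
    pd (Fin.castAdd m₂ j) (embL φ) = embL (pd j φ) := by
  apply MvPowerSeries.ext; intro e
  rw [pd_coeff, embL_coeff φ (e + Finsupp.single (Fin.castAdd m₂ j) 1),
    embL_coeff (pd j φ) e]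
  by_cases hc : condL e
  · have hc' : condL (e + Finsupp.single (Fin.castAdd m₂ j) 1) := by
      intro j'
      rw [Finsupp.add_apply, hc j', Finsupp.single_apply,
        if_neg (castAdd_ne_natAdd j j')]
      omega
    rw [if_pos hc, if_pos hc', pd_coeff]
    have h1 : rhoL (e + Finsupp.single (Fin.castAdd m₂ j) 1) = rhoL e + Finsupp.single j 1 := by
      rw [rhoL_add, iotaL_single, rhoL_iotaL]
    rw [h1]
    congr 2
  · have hc' : ¬ condL (e + Finsupp.single (Fin.castAdd m₂ j) 1) := by
      intro hc'
      apply hc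
      intro j'
      have h2 := hc' j'
      rw [Finsupp.add_apply, Finsupp.single_apply, if_neg (castAdd_ne_natAdd j j')] at h2
      omega
    rw [if_neg hc, if_neg hc', mul_zero]

lemma pd_natAdd_embR (j : Fin m₂) (ψ : Amod m₂) :
    pd (Fin.natAdd m₁ j) (embR ψ) = embR (pd j ψ) := by
  apply MvPowerSeries.ext; intro e
  rw [pd_coeff, embR_coeff ψ (e + Finsupp.single (Fin.natAdd m₁ j) 1),
    embR_coeff (pd j ψ) e]
  by_cases hc : condR e
  · have hc' : condR (e + Finsupp.single (Fin.natAdd m₁ j) 1) := by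
      intro i'
      rw [Finsupp.add_apply, hc i', Finsupp.single_apply,
        if_neg (castAdd_ne_natAdd i' j).symm]
      omega
    rw [if_pos hc, if_pos hc', pd_coeff]
    have h1 : rhoR (e + Finsupp.single (Fin.natAdd m₁ j) 1) = rhoR e + Finsupp.single j 1 := by
      rw [rhoR_add, iotaR_single, rhoR_iotaR]
    rw [h1]
    congr 2
  · have hc' : ¬ condR (e + Finsupp.single (Fin.natAdd m₁ j) 1) := by
      intro hc'
      apply hc
      intro i'
      have h2 := hc' i'
      rw [Finsupp.add_apply, Finsupp.single_apply,
        if_neg (castAdd_ne_natAdd i' j).symm] at h2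
      omega
    rw [if_neg hc, if_neg hc', mul_zero]

lemma pd_natAdd_embL (j : Fin m₂) (φ : Amod m₁) :
    pd (Fin.natAdd m₁ j) (embL φ) = 0 := by
  apply MvPowerSeries.ext; intro e
  rw [pd_coeff, map_zero]
  have hc' : ¬ condL (e + Finsupp.single (Fin.natAdd m₁ j) 1) := by
    intro hc'
    have h2 := hc' j
    rw [Finsupp.add_apply, Finsupp.single_apply, if_pos rfl] at h2
    omega
  rw [embL_coeff, if_neg hc', mul_zero]

lemma pd_castAdd_embR (i : Fin m₁) (ψ : Amod m₂) :
    pd (Fin.castAdd m₂ i) (embR ψ) = 0 := by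
  apply MvPowerSeries.ext; intro e
  rw [pd_coeff, map_zero]
  have hc' : ¬ condR (e + Finsupp.single (Fin.castAdd m₂ i) 1) := by
    intro hc'
    have h2 := hc' i
    rw [Finsupp.add_apply, Finsupp.single_apply, if_pos rfl] at h2
    omega
  rw [embR_coeff, if_neg hc', mul_zero]

lemma constantCoeff_embL (φ : Amod m₁) :
    MvPowerSeries.constantCoeff (embL (m₂ := m₂) φ) =
      MvPowerSeries.constantCoeff φ := by
  have h0 : condL (0 : Fin (m₁ + m₂) →₀ ℕ) := fun j => rfl
  rw [← MvPowerSeries.coeff_zero_eq_constantCoeff_apply,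
    ← MvPowerSeries.coeff_zero_eq_constantCoeff_apply, embL_coeff,
    if_pos h0, rhoL_zero]

lemma constantCoeff_embR (ψ : Amod m₂) :
    MvPowerSeries.constantCoeff (embR (m₁ := m₁) ψ) =
      MvPowerSeries.constantCoeff ψ := by
  have h0 : condR (0 : Fin (m₁ + m₂) →₀ ℕ) := fun i => rfl
  rw [← MvPowerSeries.coeff_zero_eq_constantCoeff_apply,
    ← MvPowerSeries.coeff_zero_eq_constantCoeff_apply, embR_coeff,
    if_pos h0, rhoR_zero]

lemma diffAtZero_embL_castAdd (φ : Amod m₁) (i : Fin m₁) :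
    diffAtZero (embL (m₂ := m₂) φ) (Fin.castAdd m₂ i) = diffAtZero φ i := by
  unfold diffAtZero
  rw [iotaL_single, embL_coeff_iotaL]

lemma diffAtZero_embL_natAdd (φ : Amod m₁) (j : Fin m₂) :
    diffAtZero (embL (m₂ := m₂) φ) (Fin.natAdd m₁ j) = 0 := by
  unfold diffAtZero
  rw [embL_coeff, if_neg]
  intro hc
  have h2 := hc j
  rw [Finsupp.single_apply, if_pos rfl] at h2
  omega

lemma diffAtZero_embR_natAdd (ψ : Amod m₂) (j : Fin m₂) :
    diffAtZero (embR (m₁ := m₁) ψ) (Fin.natAdd m₁ j) = diffAtZero ψ j := by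
  unfold diffAtZero
  rw [iotaR_single, embR_coeff_iotaR]

lemma diffAtZero_embR_castAdd (ψ : Amod m₂) (i : Fin m₁) :
    diffAtZero (embR (m₁ := m₁) ψ) (Fin.castAdd m₂ i) = 0 := by
  unfold diffAtZero
  rw [embR_coeff, if_neg]
  intro hc
  have h2 := hc i
  rw [Finsupp.single_apply, if_pos rfl] at h2
  omega

end EmbHom


section RankLemmas

variable {m m₁ m₂ : ℕ}

/-- `diffAtZero` as a `ℂ`-linear map. -/
noncomputable def Dlin (m : ℕ) : Amod m →ₗ[ℂ] (Fin m → ℂ) where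
  toFun := diffAtZero
  map_add' u v := diffAtZero_add u v
  map_smul' c φ := by
    funext j
    simp only [diffAtZero, RingHom.id_apply, Pi.smul_apply, smul_eq_mul]
    rw [map_smul, smul_eq_mul]

/-- Extension by zero `(Fin m₁ → ℂ) → (Fin (m₁+m₂) → ℂ)` on the first block. -/
noncomputable def Lmap (m₁ m₂ : ℕ) : (Fin m₁ → ℂ) →ₗ[ℂ] (Fin (m₁ + m₂) → ℂ) where
  toFun v := Fin.addCases v (fun _ => 0)
  map_add' u v := by
    funext x
    induction x using Fin.addCases with
    | left i => simp [Fin.addCases_left]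
    | right j => simp [Fin.addCases_right]
  map_smul' c v := by
    funext x
    induction x using Fin.addCases with
    | left i => simp [Fin.addCases_left]
    | right j => simp [Fin.addCases_right]

/-- Extension by zero on the second block. -/
noncomputable def Rmap (m₁ m₂ : ℕ) : (Fin m₂ → ℂ) →ₗ[ℂ] (Fin (m₁ + m₂) → ℂ) where
  toFun v := Fin.addCases (fun _ => 0) v
  map_add' u v := by
    funext x
    induction x using Fin.addCases with
    | left i => simp [Fin.addCases_left]
    | right j => simp [Fin.addCases_right]
  map_smul' c v := by
    funext x
    induction x using Fin.addCases with
    | left i => simp [Fin.addCases_left]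
    | right j => simp [Fin.addCases_right]

@[simp] lemma Lmap_castAdd (v : Fin m₁ → ℂ) (i : Fin m₁) :
    Lmap m₁ m₂ v (Fin.castAdd m₂ i) = v i := by
  show Fin.addCases (motive := fun _ => ℂ) v (fun _ => 0) (Fin.castAdd m₂ i) = v i
  exact Fin.addCases_left i

@[simp] lemma Lmap_natAdd (v : Fin m₁ → ℂ) (j : Fin m₂) :
    Lmap m₁ m₂ v (Fin.natAdd m₁ j) = 0 := by
  show Fin.addCases (motive := fun _ => ℂ) v (fun _ => 0) (Fin.natAdd m₁ j) = 0
  exact Fin.addCases_right j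

@[simp] lemma Rmap_castAdd (v : Fin m₂ → ℂ) (i : Fin m₁) :
    Rmap m₁ m₂ v (Fin.castAdd m₂ i) = 0 := by
  show Fin.addCases (motive := fun _ => ℂ) (fun _ => 0) v (Fin.castAdd m₂ i) = 0
  exact Fin.addCases_left i

@[simp] lemma Rmap_natAdd (v : Fin m₂ → ℂ) (j : Fin m₂) :
    Rmap m₁ m₂ v (Fin.natAdd m₁ j) = v j := by
  show Fin.addCases (motive := fun _ => ℂ) (fun _ => 0) v (Fin.natAdd m₁ j) = v j
  exact Fin.addCases_right j

lemma Lmap_injective : Function.Injective (Lmap m₁ m₂) := by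
  intro u v h
  funext i
  have := congrFun h (Fin.castAdd m₂ i)
  simpa using this

lemma Rmap_injective : Function.Injective (Rmap m₁ m₂) := by
  intro u v h
  funext j
  have := congrFun h (Fin.natAdd m₁ j)
  simpa using this

lemma diffAtZero_embL (φ : Amod m₁) :
    diffAtZero (embL (m₂ := m₂) φ) = Lmap m₁ m₂ (diffAtZero φ) := by
  funext x
  induction x using Fin.addCases with
  | left i => rw [diffAtZero_embL_castAdd, Lmap_castAdd]
  | right j => rw [diffAtZero_embL_natAdd, Lmap_natAdd]

lemma diffAtZero_embR (ψ : Amod m₂) :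
    diffAtZero (embR (m₁ := m₁) ψ) = Rmap m₁ m₂ (diffAtZero ψ) := by
  funext x
  induction x using Fin.addCases with
  | left i => rw [diffAtZero_embR_castAdd, Rmap_castAdd]
  | right j => rw [diffAtZero_embR_natAdd, Rmap_natAdd]

lemma constantCoeff_eq_zero_of_mem {J : Ideal (Amod m)} (hJ : J ≠ ⊤) {φ : Amod m}
    (hφ : φ ∈ J) : MvPowerSeries.constantCoeff φ = 0 := by
  by_contra h
  exact hJ (Ideal.eq_top_of_isUnit_mem J hφ
    (MvPowerSeries.isUnit_iff_constantCoeff.mpr (isUnit_iff_ne_zero.mpr h)))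

/-- The span of the differentials at zero of the elements of an ideal. -/
noncomputable def Dspan {m : ℕ} (B : Ideal (Amod m)) : Submodule ℂ (Fin m → ℂ) :=
  Submodule.span ℂ (diffAtZero '' (B : Set (Amod m)))

lemma rankIdeal_eq (B : Ideal (Amod m)) : rankIdeal B = Module.finrank ℂ (Dspan B) := rfl

lemma rankIdeal_le (B : Ideal (Amod m)) : rankIdeal B ≤ m := by
  rw [rankIdeal_eq]
  exact le_trans (Submodule.finrank_le _) (le_of_eq (Module.finrank_fin_fun ℂ))

lemma mem_prodIdeal_structure {J₁ : Ideal (Amod m₁)} {J₂ : Ideal (Amod m₂)}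
    (h₁ : J₁ ≠ ⊤) (h₂ : J₂ ≠ ⊤) {x : Amod (m₁ + m₂)} (hx : x ∈ prodIdeal J₁ J₂) :
    MvPowerSeries.constantCoeff x = 0 ∧
      diffAtZero x ∈ (Dspan J₁).map (Lmap m₁ m₂) ⊔ (Dspan J₂).map (Rmap m₁ m₂) := by
  refine Submodule.span_induction ?_ ?_ ?_ ?_ hx
  · rintro g (⟨φ, hφ, rfl⟩ | ⟨ψ, hψ, rfl⟩)
    · refine ⟨by rw [constantCoeff_embL]; exact constantCoeff_eq_zero_of_mem h₁ hφ, ?_⟩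
      rw [diffAtZero_embL]
      exact Submodule.mem_sup_left
        (Submodule.mem_map_of_mem (Submodule.subset_span (Set.mem_image_of_mem _ hφ)))
    · refine ⟨by rw [constantCoeff_embR]; exact constantCoeff_eq_zero_of_mem h₂ hψ, ?_⟩
      rw [diffAtZero_embR]
      exact Submodule.mem_sup_right
        (Submodule.mem_map_of_mem (Submodule.subset_span (Set.mem_image_of_mem _ hψ)))
  · constructor
    · exact map_zero _
    · have : diffAtZero (0 : Amod (m₁ + m₂)) = 0 := by
        funext j; simp [diffAtZero]
      rw [this]; exact Submodule.zero_mem _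
  · rintro x y hx' hy' ⟨hcx, hdx⟩ ⟨hcy, hdy⟩
    refine ⟨by rw [map_add, hcx, hcy, add_zero], ?_⟩
    rw [diffAtZero_add]
    exact Submodule.add_mem _ hdx hdy
  · rintro a x hx' ⟨hcx, hdx⟩
    have hax : a • x = a * x := rfl
    constructor
    · rw [hax, map_mul, hcx, mul_zero]
    · rw [hax, diffAtZero_mul, hcx, zero_smul, add_zero]
      exact Submodule.smul_mem _ _ hdx

lemma dspan_prodIdeal {J₁ : Ideal (Amod m₁)} {J₂ : Ideal (Amod m₂)}
    (h₁ : J₁ ≠ ⊤) (h₂ : J₂ ≠ ⊤) :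
    Dspan (prodIdeal J₁ J₂) = (Dspan J₁).map (Lmap m₁ m₂) ⊔ (Dspan J₂).map (Rmap m₁ m₂) := by
  apply le_antisymm
  · rw [Dspan, Submodule.span_le]
    rintro _ ⟨x, hx, rfl⟩
    exact (mem_prodIdeal_structure h₁ h₂ hx).2
  · refine sup_le ?_ ?_
    · rw [Dspan, Submodule.map_span]
      apply Submodule.span_le.mpr
      rintro _ ⟨_, ⟨φ, hφ, rfl⟩, rfl⟩
      rw [← diffAtZero_embL]
      apply Submodule.subset_span
      refine Set.mem_image_of_mem _ ?_
      exact Ideal.subset_span (Or.inl (Set.mem_image_of_mem _ hφ))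
    · rw [Dspan, Submodule.map_span]
      apply Submodule.span_le.mpr
      rintro _ ⟨_, ⟨ψ, hψ, rfl⟩, rfl⟩
      rw [← diffAtZero_embR]
      apply Submodule.subset_span
      refine Set.mem_image_of_mem _ ?_
      exact Ideal.subset_span (Or.inr (Set.mem_image_of_mem _ hψ))

lemma prodIdeal_ne_top {J₁ : Ideal (Amod m₁)} {J₂ : Ideal (Amod m₂)}
    (h₁ : J₁ ≠ ⊤) (h₂ : J₂ ≠ ⊤) : prodIdeal J₁ J₂ ≠ ⊤ := by
  intro htop
  have h1 : (1 : Amod (m₁ + m₂)) ∈ prodIdeal J₁ J₂ := htop ▸ Submodule.mem_top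
  have := (mem_prodIdeal_structure h₁ h₂ h1).1
  rw [map_one] at this
  exact one_ne_zero this

lemma rank_prodIdeal {J₁ : Ideal (Amod m₁)} {J₂ : Ideal (Amod m₂)}
    (h₁ : J₁ ≠ ⊤) (h₂ : J₂ ≠ ⊤) :
    rankIdeal (prodIdeal J₁ J₂) = rankIdeal J₁ + rankIdeal J₂ := by
  rw [rankIdeal_eq, rankIdeal_eq, rankIdeal_eq, dspan_prodIdeal h₁ h₂]
  have hdisj : (Dspan J₁).map (Lmap m₁ m₂) ⊓ (Dspan J₂).map (Rmap m₁ m₂) = ⊥ := by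
    rw [eq_bot_iff]
    rintro x ⟨hxL, hxR⟩
    obtain ⟨v, _, rfl⟩ := hxL
    obtain ⟨w, _, hw⟩ := hxR
    have hz : Lmap m₁ m₂ v = 0 := by
      funext y
      induction y using Fin.addCases with
      | left i =>
          have := congrFun hw (Fin.castAdd m₂ i)
          simpa using this.symm
      | right j => simp
    rw [hz]
    exact Submodule.mem_bot ℂ |>.mpr rfl
  have hsum := Submodule.finrank_sup_add_finrank_inf_eq
    ((Dspan J₁).map (Lmap m₁ m₂)) ((Dspan J₂).map (Rmap m₁ m₂))
  rw [hdisj, finrank_bot, add_zero] at hsum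
  rw [hsum]
  congr 1
  · exact (LinearEquiv.finrank_eq
      (Submodule.equivMapOfInjective (Lmap m₁ m₂) Lmap_injective (Dspan J₁))).symm
  · exact (LinearEquiv.finrank_eq
      (Submodule.equivMapOfInjective (Rmap m₁ m₂) Rmap_injective (Dspan J₂))).symm

lemma corank_prodIdeal {J₁ : Ideal (Amod m₁)} {J₂ : Ideal (Amod m₂)}
    (h₁ : J₁ ≠ ⊤) (h₂ : J₂ ≠ ⊤) :
    corankIdeal (prodIdeal J₁ J₂) = corankIdeal J₁ + corankIdeal J₂ := by
  have hr := rank_prodIdeal h₁ h₂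
  have hl₁ := rankIdeal_le J₁
  have hl₂ := rankIdeal_le J₂
  unfold corankIdeal
  omega

lemma det_eq_zero_of_rows_in_span {n k : ℕ} (V : Submodule ℂ (Fin n → ℂ))
    (hV : Module.finrank ℂ V < k) (v : Fin k → Fin n → ℂ) (hv : ∀ i, v i ∈ V)
    (d : Fin k → Fin n) :
    Matrix.det (Matrix.of fun i l => v i (d l)) = 0 := by
  by_contra hdet
  have hunit : IsUnit (Matrix.of fun i l => v i (d l)) :=
    (Matrix.isUnit_iff_isUnit_det _).mpr (isUnit_iff_ne_zero.mpr hdet)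
  have hrows := Matrix.linearIndependent_rows_iff_isUnit.mpr hunit
  have hv' : LinearIndependent ℂ v := by
    have hcomp : (fun i => (Matrix.of fun i l => v i (d l)) i)
        = (LinearMap.funLeft ℂ ℂ d) ∘ v := rfl
    change LinearIndependent ℂ (fun i => (Matrix.of fun i l => v i (d l)) i) at hrows
    rw [hcomp] at hrows
    exact LinearIndependent.of_comp _ hrows
  have hvV : LinearIndependent ℂ (fun i => (⟨v i, hv i⟩ : V)) := by
    apply LinearIndependent.of_comp V.subtype
    have : (V.subtype ∘ fun i => (⟨v i, hv i⟩ : V)) = v := rfl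
    rw [this]
    exact hv'
  have hcard := hvV.fintype_card_le_finrank
  rw [Fintype.card_fin] at hcard
  omega

lemma exists_nonzero_minor {n r : ℕ} (V : Submodule ℂ (Fin n → ℂ))
    (hV : Module.finrank ℂ V = r) :
    ∃ w : Fin r → (Fin n → ℂ), (∀ i, w i ∈ V) ∧ ∃ d : Fin r → Fin n, StrictMono d ∧
      Matrix.det (Matrix.of fun i l => w i (d l)) ≠ 0 := by
  classical
  -- basis of V
  let b : Module.Basis (Fin r) ℂ V := (Module.finBasis ℂ V).reindex (finCongr hV)
  set w : Fin r → (Fin n → ℂ) := fun i => (b i : Fin n → ℂ) with hw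
  have hwmem : ∀ i, w i ∈ V := fun i => (b i).2
  have hwind : LinearIndependent ℂ w := by
    have := b.linearIndependent
    exact this.map' V.subtype (Submodule.ker_subtype V)
  -- the matrix of rows w
  set W : Matrix (Fin r) (Fin n) ℂ := Matrix.of fun i x => w i x with hWdef
  have hWrank : W.rank = r := by
    have := hwind.rank_matrix (M := W)
    rw [this, Fintype.card_fin]
  -- columns of W span a space of dimension r
  have hcols : Module.finrank ℂ (Submodule.span ℂ (Set.range W.transpose)) = r := by
    have := Matrix.rank_eq_finrank_span_cols W; rw [hWrank] at this; exact this.symm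
  -- extract r linearly independent columns from the set of columns
  obtain ⟨bs, hbs_sub, hbs_span, hbs_ind⟩ := exists_linearIndependent ℂ (Set.range W.transpose)
  have hbs_fin : bs.Finite := LinearIndependent.setFinite hbs_ind
  haveI : Fintype bs := hbs_fin.fintype
  have hbs_card : bs.toFinset.card = r := by
    have := finrank_span_set_eq_card hbs_ind
    rw [hbs_span, hcols] at this
    exact this.symm
  -- choose a column index for each element of bs
  have hchoice : ∀ y : bs, ∃ x : Fin n, W.transpose x = (y : Fin r → ℂ) := fun y => hbs_sub y.2
  choose F hF using hchoice
  have hFinj : Function.Injective F := by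
    intro y₁ y₂ h
    apply Subtype.ext
    rw [← hF y₁, ← hF y₂, h]
  set T : Finset (Fin n) := Finset.univ.image F with hT
  have hTcard : T.card = r := by
    rw [hT, Finset.card_image_of_injective _ hFinj, Finset.card_univ,
      ← Set.toFinset_card, hbs_card]
  set d : Fin r → Fin n := fun l => ((T.orderIsoOfFin hTcard) l : Fin n) with hd
  have hdmono : StrictMono d := fun a a' haa =>
    Subtype.coe_lt_coe.mpr ((T.orderIsoOfFin hTcard).strictMono haa)
  have hdT : ∀ l, d l ∈ T := fun l => ((T.orderIsoOfFin hTcard) l).2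
  -- columns at d
  have hcol_mem : ∀ l, W.transpose (d l) ∈ bs := by
    intro l
    obtain ⟨y, _, hy⟩ := Finset.mem_image.mp (hdT l)
    rw [← hy, hF y]
    exact y.2
  set E : Fin r → bs := fun l => ⟨W.transpose (d l), hcol_mem l⟩ with hE
  have hEinj : Function.Injective E := by
    intro l₁ l₂ h
    have hcols_eq : W.transpose (d l₁) = W.transpose (d l₂) := congrArg Subtype.val h
    obtain ⟨y₁, _, hy₁⟩ := Finset.mem_image.mp (hdT l₁)
    obtain ⟨y₂, _, hy₂⟩ := Finset.mem_image.mp (hdT l₂)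
    have : y₁ = y₂ := by
      apply Subtype.ext
      rw [← hF y₁, ← hF y₂, hy₁, hy₂, hcols_eq]
    have hdeq : d l₁ = d l₂ := by rw [← hy₁, ← hy₂, this]
    exact hdmono.injective hdeq
  have hcold : LinearIndependent ℂ (fun l => W.transpose (d l)) := by
    have := hbs_ind.comp E hEinj
    exact this
  -- conclude
  refine ⟨w, hwmem, d, hdmono, ?_⟩
  have hNcols : LinearIndependent ℂ (fun l => (Matrix.of fun i l' => w i (d l')).transpose l) := by
    have hcc : (fun l => (Matrix.of fun i l' => w i (d l')).transpose l) = fun l => W.transpose (d l) := rfl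
    rw [hcc]
    exact hcold
  have hunit := Matrix.linearIndependent_cols_iff_isUnit.mp hNcols
  have := (Matrix.isUnit_iff_isUnit_det _).mp hunit
  exact isUnit_iff_ne_zero.mp this

end RankLemmas


section DetLemmas

variable {m : ℕ}

lemma card_compl_eq {k s : ℕ} (S : Finset (Fin k)) (hS : S.card = s) :
    Sᶜ.card = k - s := by
  rw [Finset.card_compl, hS, Fintype.card_fin]

lemma det_eq_zero_of_rect_block {k : ℕ} {R : Type*} [CommRing R]
    (M : Matrix (Fin k) (Fin k) R) (S C : Finset (Fin k))
    (h0 : ∀ i ∈ S, ∀ l, l ∉ C → M i l = 0) (hc : C.card < S.card) :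
    M.det = 0 := by
  rw [Matrix.det_apply]
  refine Finset.sum_eq_zero fun σ _ => ?_
  have hex : ∃ l, σ l ∈ S ∧ l ∉ C := by
    by_contra hno
    push_neg at hno
    have hsub : S.image (σ⁻¹ : Equiv.Perm (Fin k)) ⊆ C := by
      intro x hx
      obtain ⟨y, hy, rfl⟩ := Finset.mem_image.mp hx
      apply hno
      have : σ ((σ⁻¹ : Equiv.Perm (Fin k)) y) = y := Equiv.apply_symm_apply σ y
      rw [this]
      exact hy
    have hca : S.card ≤ C.card := by
      calc S.card = (S.image (σ⁻¹ : Equiv.Perm (Fin k))).card :=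
            (Finset.card_image_of_injective _ (Equiv.injective _)).symm
        _ ≤ C.card := Finset.card_le_card hsub
    omega
  obtain ⟨l, hlS, hlC⟩ := hex
  have hzero : ∏ i, M (σ i) i = 0 :=
    Finset.prod_eq_zero (Finset.mem_univ l) (h0 _ hlS _ hlC)
  rw [hzero, smul_zero]

lemma det_eq_zero_of_block_zero {k s : ℕ} {R : Type*} [CommRing R]
    (M : Matrix (Fin k) (Fin k) R) (S C : Finset (Fin k)) (hS : S.card = s) (hC : C.card = s)
    (h10 : ∀ i ∈ S, ∀ l, l ∉ C → M i l = 0)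
    (h20 : ∀ i, i ∉ S → ∀ l ∈ C, M i l = 0)
    (hAD : Matrix.det (Matrix.of fun (i l : Fin s) =>
             M ((S.orderIsoOfFin hS i : Fin k)) ((C.orderIsoOfFin hC l : Fin k))) = 0
         ∨ Matrix.det (Matrix.of fun (i l : Fin (k - s)) =>
             M ((Sᶜ.orderIsoOfFin (card_compl_eq S hS) i : Fin k))
               ((Cᶜ.orderIsoOfFin (card_compl_eq C hC) l : Fin k))) = 0) :
    M.det = 0 := by
  classical
  let eS : Fin s ⊕ Fin (k - s) ≃ Fin k :=
    (Equiv.sumCongr (S.orderIsoOfFin hS).toEquiv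
      (((Sᶜ.orderIsoOfFin (card_compl_eq S hS)).toEquiv).trans
        (Equiv.subtypeEquivRight (fun x => Finset.mem_compl)))).trans
      (Equiv.sumCompl (fun x => x ∈ S))
  let eC : Fin s ⊕ Fin (k - s) ≃ Fin k :=
    (Equiv.sumCongr (C.orderIsoOfFin hC).toEquiv
      (((Cᶜ.orderIsoOfFin (card_compl_eq C hC)).toEquiv).trans
        (Equiv.subtypeEquivRight (fun x => Finset.mem_compl)))).trans
      (Equiv.sumCompl (fun x => x ∈ C))
  have heSl : ∀ i, eS (Sum.inl i) = (S.orderIsoOfFin hS i : Fin k) := fun i => rfl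
  have heSr : ∀ i, eS (Sum.inr i) = (Sᶜ.orderIsoOfFin (card_compl_eq S hS) i : Fin k) :=
    fun i => rfl
  have heCl : ∀ l, eC (Sum.inl l) = (C.orderIsoOfFin hC l : Fin k) := fun l => rfl
  have heCr : ∀ l, eC (Sum.inr l) = (Cᶜ.orderIsoOfFin (card_compl_eq C hC) l : Fin k) :=
    fun l => rfl
  have hblocks : M.submatrix eS eC = Matrix.fromBlocks
      (Matrix.of fun (i l : Fin s) =>
        M ((S.orderIsoOfFin hS i : Fin k)) ((C.orderIsoOfFin hC l : Fin k)))
      0 0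
      (Matrix.of fun (i l : Fin (k - s)) =>
        M ((Sᶜ.orderIsoOfFin (card_compl_eq S hS) i : Fin k))
          ((Cᶜ.orderIsoOfFin (card_compl_eq C hC) l : Fin k))) := by
    ext i l
    rcases i with i | i <;> rcases l with l | l
    · rfl
    · show M (eS (Sum.inl i)) (eC (Sum.inr l)) = 0
      rw [heSl, heCr]
      refine h10 _ (S.orderIsoOfFin hS i).2 _ ?_
      exact Finset.mem_compl.mp (Cᶜ.orderIsoOfFin (card_compl_eq C hC) l).2
    · show M (eS (Sum.inr i)) (eC (Sum.inl l)) = 0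
      rw [heSr, heCl]
      refine h20 _ ?_ _ (C.orderIsoOfFin hC l).2
      exact Finset.mem_compl.mp (Sᶜ.orderIsoOfFin (card_compl_eq S hS) i).2
    · rfl
  have hdetsub : (M.submatrix eS eC).det = 0 := by
    rw [hblocks, Matrix.det_fromBlocks_zero₂₁]
    rcases hAD with h | h
    · rw [h, zero_mul]
    · rw [h, mul_zero]
  -- relate det of submatrix to det of M
  set π : Equiv.Perm (Fin s ⊕ Fin (k - s)) := eS.trans eC.symm with hπ
  have hsub2 : M.submatrix eS eC = (M.submatrix eC eC).submatrix π id := by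
    funext i l
    show M (eS i) (eC (id l)) = M (eC (eC.symm (eS i))) (eC (id l))
    rw [Equiv.apply_symm_apply]
  have hperm := Matrix.det_permute π (M.submatrix eC eC)
  rw [← hsub2] at hperm
  rw [hdetsub] at hperm
  have hMdet := Matrix.det_submatrix_equiv_self eC M
  rcases Int.units_eq_one_or (Equiv.Perm.sign π) with hsig | hsig
  · rw [hsig] at hperm
    simp only [Units.val_one, Int.cast_one, one_mul] at hperm
    rw [← hMdet, ← hperm]
  · rw [hsig] at hperm
    simp only [Units.val_neg, Units.val_one, Int.cast_neg, Int.cast_one, neg_mul, one_mul]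
      at hperm
    rw [← hMdet]
    exact neg_eq_zero.mp hperm.symm

/-- The set of `k × k` Jacobian minors of elements of an ideal. -/
def minorSet (m k : ℕ) (B : Ideal (Amod m)) : Set (Amod m) :=
  { f | ∃ φ : Fin k → Amod m, (∀ i, φ i ∈ B) ∧ ∃ j : Fin k → Fin m, StrictMono j ∧
      f = Matrix.det (Matrix.of fun i l => pd (j l) (φ i)) }

lemma strictMono_le_card {s m : ℕ} (c : Fin s → Fin m) (hc : StrictMono c) : s ≤ m := by
  have := Fintype.card_le_of_injective c hc.injective
  simpa using this

lemma jacExt_eq (k : ℕ) (B : Ideal (Amod m)) :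
    jacExt k B = B ⊔ Ideal.span (minorSet m k B) := by
  unfold jacExt
  split_ifs with h
  · have hempty : minorSet m k B = ∅ := by
      rw [Set.eq_empty_iff_forall_notMem]
      rintro f ⟨φ, hφ, j, hj, rfl⟩
      have := strictMono_le_card j hj
      omega
    rw [hempty, Ideal.span_empty, sup_bot_eq]
  · rfl

lemma minor_mem_span_minors {r : ℕ} (B : Ideal (Amod m)) :
    ∀ s : ℕ, r + 1 ≤ s → ∀ (φ : Fin s → Amod m) (c : Fin s → Fin m),
      (∀ i, φ i ∈ B) → StrictMono c →
      Matrix.det (Matrix.of fun i l => pd (c l) (φ i)) ∈ Ideal.span (minorSet m (r + 1) B) := by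
  intro s
  induction s with
  | zero => intro h; omega
  | succ t IH =>
    intro hle φ c hφ hc
    by_cases heq : r = t
    · subst heq
      exact Ideal.subset_span ⟨φ, hφ, c, hc, rfl⟩
    · have ht : r + 1 ≤ t := by omega
      rw [Matrix.det_succ_row_zero]
      apply Ideal.sum_mem
      intro l _
      apply Ideal.mul_mem_left
      have hsub : (Matrix.of fun i l => pd (c l) (φ i)).submatrix Fin.succ l.succAbove
          = Matrix.of fun i l' => pd ((c ∘ l.succAbove) l') ((φ ∘ Fin.succ) i) := rfl
      rw [hsub]
      exact IH ht _ _ (fun i => hφ _) (hc.comp (Fin.strictMono_succAbove l))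

end DetLemmas


section Helpers

variable {m m₁ m₂ : ℕ}

lemma pd_zero (j : Fin m) : pd j (0 : Amod m) = 0 := by
  apply MvPowerSeries.ext; intro e
  rw [pd_coeff, map_zero, map_zero, mul_zero]

/-- `pd j` as an additive monoid hom. -/
noncomputable def pdHom (j : Fin m) : Amod m →+ Amod m :=
  AddMonoidHom.mk' (pd j) (pd_add j)

lemma pd_sum {ι : Type*} (j : Fin m) (s : Finset ι) (F : ι → Amod m) :
    pd j (∑ a ∈ s, F a) = ∑ a ∈ s, pd j (F a) := map_sum (pdHom j) F s

lemma embL_mem_prodIdeal {B₁ : Ideal (Amod m₁)} (B₂ : Ideal (Amod m₂)) {φ : Amod m₁}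
    (hφ : φ ∈ B₁) : embL φ ∈ prodIdeal B₁ B₂ :=
  Ideal.subset_span (Or.inl (Set.mem_image_of_mem _ hφ))

lemma embR_mem_prodIdeal (B₁ : Ideal (Amod m₁)) {B₂ : Ideal (Amod m₂)} {ψ : Amod m₂}
    (hψ : ψ ∈ B₂) : embR ψ ∈ prodIdeal B₁ B₂ :=
  Ideal.subset_span (Or.inr (Set.mem_image_of_mem _ hψ))

lemma prodIdeal_eq_sup (J₁ : Ideal (Amod m₁)) (J₂ : Ideal (Amod m₂)) :
    prodIdeal J₁ J₂ = J₁.map (embLh m₁ m₂) ⊔ J₂.map (embRh m₁ m₂) := by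
  unfold prodIdeal
  rw [Ideal.span_union]
  rfl

lemma dspan_eq_map (B : Ideal (Amod m)) :
    Dspan B = (Submodule.restrictScalars ℂ B).map (Dlin m) := by
  have hset : diffAtZero '' (B : Set (Amod m))
      = ((Submodule.restrictScalars ℂ B).map (Dlin m) : Set (Fin m → ℂ)) := by
    rw [Submodule.map_coe]
    rfl
  rw [Dspan, hset, Submodule.span_eq]

lemma exists_elements_of_rank (B : Ideal (Amod m)) {r : ℕ} (h : rankIdeal B = r) :
    ∃ ψ : Fin r → Amod m, (∀ i, ψ i ∈ B) ∧ ∃ d : Fin r → Fin m, StrictMono d ∧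
      Matrix.det (Matrix.of fun i l => diffAtZero (ψ i) (d l)) ≠ 0 := by
  rw [rankIdeal_eq] at h
  obtain ⟨w, hw, d, hd, hdet⟩ := exists_nonzero_minor (Dspan B) h
  have hw' : ∀ i, ∃ ψ : Amod m, ψ ∈ B ∧ diffAtZero ψ = w i := by
    intro i
    have := hw i
    rw [dspan_eq_map] at this
    obtain ⟨ψ, hψ, hψw⟩ := Submodule.mem_map.mp this
    exact ⟨ψ, hψ, hψw⟩
  choose ψ hψB hψw using hw'
  refine ⟨ψ, hψB, d, hd, ?_⟩
  have : (Matrix.of fun i l => diffAtZero (ψ i) (d l))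
      = Matrix.of fun i l => w i (d l) := by
    ext i l
    show diffAtZero (ψ i) (d l) = w i (d l)
    rw [hψw i]
  rw [this]
  exact hdet

lemma constantCoeff_minor {s : ℕ} (φ : Fin s → Amod m) (c : Fin s → Fin m) :
    MvPowerSeries.constantCoeff
        (Matrix.det (Matrix.of fun i l => pd (c l) (φ i)))
      = Matrix.det (Matrix.of fun i l => diffAtZero (φ i) (c l)) := by
  rw [RingHom.map_det]
  congr 1
  ext i l
  show MvPowerSeries.constantCoeff (pd (c l) (φ i)) = diffAtZero (φ i) (c l)
  exact constantCoeff_pd _ _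

end Helpers


section SupsetDir

variable {m₁ m₂ : ℕ}

lemma embL_minor_mem (B₁ : Ideal (Amod m₁)) (B₂ : Ideal (Amod m₂)) {r₂ : ℕ}
    (h₂ : rankIdeal B₂ = r₂) {s : ℕ} (φ : Fin s → Amod m₁) (hφ : ∀ i, φ i ∈ B₁)
    (c : Fin s → Fin m₁) (hc : StrictMono c) :
    embL (Matrix.det (Matrix.of fun i l => pd (c l) (φ i)))
      ∈ Ideal.span (minorSet (m₁ + m₂) (s + r₂) (prodIdeal B₁ B₂)) := by
  classical
  obtain ⟨ψ, hψB, d, hd, hdet⟩ := exists_elements_of_rank B₂ h₂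
  set Θ : Fin (s + r₂) → Amod (m₁ + m₂) :=
    Fin.addCases (fun i => embL (φ i)) (fun i => embR (ψ i)) with hΘdef
  set jc : Fin (s + r₂) → Fin (m₁ + m₂) :=
    Fin.addCases (fun i => Fin.castAdd m₂ (c i)) (fun i => Fin.natAdd m₁ (d i)) with hjcdef
  have hΘl : ∀ i, Θ (Fin.castAdd r₂ i) = embL (φ i) := fun i => Fin.addCases_left i
  have hΘr : ∀ i, Θ (Fin.natAdd s i) = embR (ψ i) := fun i => Fin.addCases_right i
  have hjcl : ∀ i, jc (Fin.castAdd r₂ i) = Fin.castAdd m₂ (c i) := fun i => Fin.addCases_left i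
  have hjcr : ∀ i, jc (Fin.natAdd s i) = Fin.natAdd m₁ (d i) := fun i => Fin.addCases_right i
  have hΘmem : ∀ i, Θ i ∈ prodIdeal B₁ B₂ := by
    intro i
    induction i using Fin.addCases with
    | left i => rw [hΘl]; exact embL_mem_prodIdeal B₂ (hφ i)
    | right i => rw [hΘr]; exact embR_mem_prodIdeal B₁ (hψB i)
  have hjcmono : StrictMono jc := by
    have key : ∀ x y : Fin (s + r₂), x < y → ((jc x : ℕ) < (jc y : ℕ)) := by
      intro x y
      induction x using Fin.addCases with
      | left i =>
          induction y using Fin.addCases with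
          | left i' =>
              intro hxy
              rw [hjcl, hjcl]
              have hii : i < i' := by
                rw [Fin.lt_def] at hxy ⊢
                simpa using hxy
              have := hc hii
              rw [Fin.lt_def] at this
              simpa using this
          | right j' =>
              intro _
              rw [hjcl, hjcr]
              have := (c i).isLt
              simp only [Fin.coe_castAdd, Fin.coe_natAdd]
              omega
      | right j =>
          induction y using Fin.addCases with
          | left i' =>
              intro hxy
              exfalso
              rw [Fin.lt_def] at hxy
              have := i'.isLt
              simp only [Fin.coe_castAdd, Fin.coe_natAdd] at hxy
              omega
          | right j' =>
              intro hxy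
              rw [hjcr, hjcr]
              have hjj : j < j' := by
                rw [Fin.lt_def] at hxy
                simp only [Fin.coe_natAdd] at hxy
                rw [Fin.lt_def]
                omega
              have := hd hjj
              rw [Fin.lt_def] at this
              simp only [Fin.coe_natAdd]
              omega
    intro x y hxy
    rw [Fin.lt_def]
    exact key x y hxy
  have hgen : Matrix.det (Matrix.of fun i l => pd (jc l) (Θ i))
      ∈ Ideal.span (minorSet (m₁ + m₂) (s + r₂) (prodIdeal B₁ B₂)) :=
    Ideal.subset_span ⟨Θ, hΘmem, jc, hjcmono, rfl⟩
  have hsub : (Matrix.of fun i l => pd (jc l) (Θ i)).submatrix finSumFinEquiv finSumFinEquiv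
      = Matrix.fromBlocks
          (Matrix.of fun i l => embL (pd (c l) (φ i)))
          0 0
          (Matrix.of fun i l => embR (pd (d l) (ψ i))) := by
    apply Matrix.ext
    intro i l
    rcases i with i | i <;> rcases l with l | l
    · show pd (jc (finSumFinEquiv (Sum.inl l))) (Θ (finSumFinEquiv (Sum.inl i)))
        = embL (pd (c l) (φ i))
      rw [finSumFinEquiv_apply_left, finSumFinEquiv_apply_left, hjcl, hΘl, pd_castAdd_embL]
    · show pd (jc (finSumFinEquiv (Sum.inr l))) (Θ (finSumFinEquiv (Sum.inl i))) = 0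
      rw [finSumFinEquiv_apply_right, finSumFinEquiv_apply_left, hjcr, hΘl, pd_natAdd_embL]
    · show pd (jc (finSumFinEquiv (Sum.inl l))) (Θ (finSumFinEquiv (Sum.inr i))) = 0
      rw [finSumFinEquiv_apply_left, finSumFinEquiv_apply_right, hjcl, hΘr, pd_castAdd_embR]
    · show pd (jc (finSumFinEquiv (Sum.inr l))) (Θ (finSumFinEquiv (Sum.inr i)))
        = embR (pd (d l) (ψ i))
      rw [finSumFinEquiv_apply_right, finSumFinEquiv_apply_right, hjcr, hΘr, pd_natAdd_embR]
  have hblock : Matrix.det (Matrix.of fun i l => pd (jc l) (Θ i))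
      = embL (Matrix.det (Matrix.of fun i l => pd (c l) (φ i)))
        * embR (Matrix.det (Matrix.of fun i l => pd (d l) (ψ i))) := by
    rw [← Matrix.det_submatrix_equiv_self finSumFinEquiv
      (Matrix.of fun i l => pd (jc l) (Θ i)), hsub, Matrix.det_fromBlocks_zero₂₁]
    congr 1
    · have hmap : (Matrix.of fun i l => embL (m₂ := m₂) (pd (c l) (φ i)))
          = (embLh m₁ m₂).mapMatrix (Matrix.of fun i l => pd (c l) (φ i)) := rfl
      rw [hmap, ← RingHom.map_det]
      rfl
    · have hmap : (Matrix.of fun i l => embR (m₁ := m₁) (pd (d l) (ψ i)))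
          = (embRh m₁ m₂).mapMatrix (Matrix.of fun i l => pd (d l) (ψ i)) := rfl
      rw [hmap, ← RingHom.map_det]
      rfl
  have hu : IsUnit (embR (m₁ := m₁) (Matrix.det (Matrix.of fun i l => pd (d l) (ψ i)))) := by
    rw [MvPowerSeries.isUnit_iff_constantCoeff, constantCoeff_embR, constantCoeff_minor]
    exact isUnit_iff_ne_zero.mpr hdet
  obtain ⟨v, hv⟩ := hu.exists_right_inv
  have hfin : embL (Matrix.det (Matrix.of fun i l => pd (c l) (φ i)))
      = (Matrix.det (Matrix.of fun i l => pd (jc l) (Θ i))) * v := by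
    rw [hblock, mul_assoc, hv, mul_one]
  rw [hfin]
  exact Ideal.mul_mem_right _ _ hgen

lemma embR_minor_mem (B₁ : Ideal (Amod m₁)) (B₂ : Ideal (Amod m₂)) {r₁ : ℕ}
    (h₁ : rankIdeal B₁ = r₁) {s : ℕ} (ψ : Fin s → Amod m₂) (hψ : ∀ i, ψ i ∈ B₂)
    (d : Fin s → Fin m₂) (hd : StrictMono d) :
    embR (Matrix.det (Matrix.of fun i l => pd (d l) (ψ i)))
      ∈ Ideal.span (minorSet (m₁ + m₂) (r₁ + s) (prodIdeal B₁ B₂)) := by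
  classical
  obtain ⟨φ, hφB, c, hc, hdet⟩ := exists_elements_of_rank B₁ h₁
  set Θ : Fin (r₁ + s) → Amod (m₁ + m₂) :=
    Fin.addCases (fun i => embL (φ i)) (fun i => embR (ψ i)) with hΘdef
  set jc : Fin (r₁ + s) → Fin (m₁ + m₂) :=
    Fin.addCases (fun i => Fin.castAdd m₂ (c i)) (fun i => Fin.natAdd m₁ (d i)) with hjcdef
  have hΘl : ∀ i, Θ (Fin.castAdd s i) = embL (φ i) := fun i => Fin.addCases_left i
  have hΘr : ∀ i, Θ (Fin.natAdd r₁ i) = embR (ψ i) := fun i => Fin.addCases_right i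
  have hjcl : ∀ i, jc (Fin.castAdd s i) = Fin.castAdd m₂ (c i) := fun i => Fin.addCases_left i
  have hjcr : ∀ i, jc (Fin.natAdd r₁ i) = Fin.natAdd m₁ (d i) := fun i => Fin.addCases_right i
  have hΘmem : ∀ i, Θ i ∈ prodIdeal B₁ B₂ := by
    intro i
    induction i using Fin.addCases with
    | left i => rw [hΘl]; exact embL_mem_prodIdeal B₂ (hφB i)
    | right i => rw [hΘr]; exact embR_mem_prodIdeal B₁ (hψ i)
  have hjcmono : StrictMono jc := by
    have key : ∀ x y : Fin (r₁ + s), x < y → ((jc x : ℕ) < (jc y : ℕ)) := by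
      intro x y
      induction x using Fin.addCases with
      | left i =>
          induction y using Fin.addCases with
          | left i' =>
              intro hxy
              rw [hjcl, hjcl]
              have hii : i < i' := by
                rw [Fin.lt_def] at hxy ⊢
                simpa using hxy
              have := hc hii
              rw [Fin.lt_def] at this
              simpa using this
          | right j' =>
              intro _
              rw [hjcl, hjcr]
              have := (c i).isLt
              simp only [Fin.coe_castAdd, Fin.coe_natAdd]
              omega
      | right j =>
          induction y using Fin.addCases with
          | left i' =>
              intro hxy
              exfalso
              rw [Fin.lt_def] at hxy
              have := i'.isLt
              simp only [Fin.coe_castAdd, Fin.coe_natAdd] at hxy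
              omega
          | right j' =>
              intro hxy
              rw [hjcr, hjcr]
              have hjj : j < j' := by
                rw [Fin.lt_def] at hxy
                simp only [Fin.coe_natAdd] at hxy
                rw [Fin.lt_def]
                omega
              have := hd hjj
              rw [Fin.lt_def] at this
              simp only [Fin.coe_natAdd]
              omega
    intro x y hxy
    rw [Fin.lt_def]
    exact key x y hxy
  have hgen : Matrix.det (Matrix.of fun i l => pd (jc l) (Θ i))
      ∈ Ideal.span (minorSet (m₁ + m₂) (r₁ + s) (prodIdeal B₁ B₂)) :=
    Ideal.subset_span ⟨Θ, hΘmem, jc, hjcmono, rfl⟩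
  have hsub : (Matrix.of fun i l => pd (jc l) (Θ i)).submatrix finSumFinEquiv finSumFinEquiv
      = Matrix.fromBlocks
          (Matrix.of fun i l => embL (pd (c l) (φ i)))
          0 0
          (Matrix.of fun i l => embR (pd (d l) (ψ i))) := by
    apply Matrix.ext
    intro i l
    rcases i with i | i <;> rcases l with l | l
    · show pd (jc (finSumFinEquiv (Sum.inl l))) (Θ (finSumFinEquiv (Sum.inl i)))
        = embL (pd (c l) (φ i))
      rw [finSumFinEquiv_apply_left, finSumFinEquiv_apply_left, hjcl, hΘl, pd_castAdd_embL]
    · show pd (jc (finSumFinEquiv (Sum.inr l))) (Θ (finSumFinEquiv (Sum.inl i))) = 0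
      rw [finSumFinEquiv_apply_right, finSumFinEquiv_apply_left, hjcr, hΘl, pd_natAdd_embL]
    · show pd (jc (finSumFinEquiv (Sum.inl l))) (Θ (finSumFinEquiv (Sum.inr i))) = 0
      rw [finSumFinEquiv_apply_left, finSumFinEquiv_apply_right, hjcl, hΘr, pd_castAdd_embR]
    · show pd (jc (finSumFinEquiv (Sum.inr l))) (Θ (finSumFinEquiv (Sum.inr i)))
        = embR (pd (d l) (ψ i))
      rw [finSumFinEquiv_apply_right, finSumFinEquiv_apply_right, hjcr, hΘr, pd_natAdd_embR]
  have hblock : Matrix.det (Matrix.of fun i l => pd (jc l) (Θ i))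
      = embL (Matrix.det (Matrix.of fun i l => pd (c l) (φ i)))
        * embR (Matrix.det (Matrix.of fun i l => pd (d l) (ψ i))) := by
    rw [← Matrix.det_submatrix_equiv_self finSumFinEquiv
      (Matrix.of fun i l => pd (jc l) (Θ i)), hsub, Matrix.det_fromBlocks_zero₂₁]
    congr 1
    · have hmap : (Matrix.of fun i l => embL (m₂ := m₂) (pd (c l) (φ i)))
          = (embLh m₁ m₂).mapMatrix (Matrix.of fun i l => pd (c l) (φ i)) := rfl
      rw [hmap, ← RingHom.map_det]
      rfl
    · have hmap : (Matrix.of fun i l => embR (m₁ := m₁) (pd (d l) (ψ i)))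
          = (embRh m₁ m₂).mapMatrix (Matrix.of fun i l => pd (d l) (ψ i)) := rfl
      rw [hmap, ← RingHom.map_det]
      rfl
  have hu : IsUnit (embL (m₂ := m₂) (Matrix.det (Matrix.of fun i l => pd (c l) (φ i)))) := by
    rw [MvPowerSeries.isUnit_iff_constantCoeff, constantCoeff_embL, constantCoeff_minor]
    exact isUnit_iff_ne_zero.mpr hdet
  obtain ⟨v, hv⟩ := hu.exists_right_inv
  have hfin : embR (Matrix.det (Matrix.of fun i l => pd (d l) (ψ i)))
      = v * (Matrix.det (Matrix.of fun i l => pd (jc l) (Θ i))) := by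
    rw [hblock, ← mul_assoc, mul_comm v, hv, one_mul]
  rw [hfin]
  exact Ideal.mul_mem_left _ _ hgen

end SupsetDir


section SubsetDir

variable {m₁ m₂ : ℕ}

set_option maxHeartbeats 1000000 in
set_option synthInstance.maxHeartbeats 200000 in
lemma minor_prod_mem (B₁ : Ideal (Amod m₁)) (B₂ : Ideal (Amod m₂)) {r₁ r₂ : ℕ}
    (h₁ : rankIdeal B₁ = r₁) (h₂ : rankIdeal B₂ = r₂) {k : ℕ} (hk : k = r₁ + r₂ + 1)
    (θ : Fin k → Amod (m₁ + m₂)) (hθ : ∀ i, θ i ∈ prodIdeal B₁ B₂)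
    (jc : Fin k → Fin (m₁ + m₂)) (hjc : StrictMono jc) :
    Matrix.det (Matrix.of fun i l => pd (jc l) (θ i))
      ∈ prodIdeal B₁ B₂ ⊔ Ideal.span (embL '' minorSet m₁ (r₁ + 1) B₁)
          ⊔ Ideal.span (embR '' minorSet m₂ (r₂ + 1) B₂) := by
  classical
  set R : Ideal (Amod (m₁ + m₂)) := prodIdeal B₁ B₂
      ⊔ Ideal.span (embL '' minorSet m₁ (r₁ + 1) B₁)
      ⊔ Ideal.span (embR '' minorSet m₂ (r₂ + 1) B₂) with hR
  have hNR : prodIdeal B₁ B₂ ≤ R := le_trans le_sup_left le_sup_left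
  have hI1R : Ideal.span (embL '' minorSet m₁ (r₁ + 1) B₁) ≤ R :=
    le_trans le_sup_right le_sup_left
  have hI2R : Ideal.span (embR '' minorSet m₂ (r₂ + 1) B₂) ≤ R := le_sup_right
  set π : Amod (m₁ + m₂) →+* Amod (m₁ + m₂) ⧸ R := Ideal.Quotient.mk R with hπ
  rw [← Ideal.Quotient.eq_zero_iff_mem]
  -- Key claim: any minor built from pure generators vanishes mod R.
  have hkey : ∀ G : Fin k → Amod (m₁ + m₂),
      (∀ i, G i ∈ embL '' (B₁ : Set (Amod m₁)) ∪ embR '' (B₂ : Set (Amod m₂))) →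
      Matrix.det (Matrix.of fun i l => π (pd (jc l) (G i))) = 0 := by
    intro G hG
    have hchoice : ∀ i, (∃ φ, φ ∈ B₁ ∧ G i = embL φ) ∨ (∃ ψ, ψ ∈ B₂ ∧ G i = embR ψ) := by
      intro i
      rcases hG i with ⟨φ, hφ, hφe⟩ | ⟨ψ, hψ, hψe⟩
      · exact Or.inl ⟨φ, hφ, hφe.symm⟩
      · exact Or.inr ⟨ψ, hψ, hψe.symm⟩
    set S : Finset (Fin k) := Finset.univ.filter (fun i => ∃ φ, φ ∈ B₁ ∧ G i = embL φ)
      with hSdef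
    set C : Finset (Fin k) := Finset.univ.filter (fun l => ((jc l : ℕ) < m₁)) with hCdef
    set M : Matrix (Fin k) (Fin k) (Amod (m₁ + m₂) ⧸ R) :=
      Matrix.of fun i l => π (pd (jc l) (G i)) with hMdef
    have hSspec : ∀ i ∈ S, ∃ φ, φ ∈ B₁ ∧ G i = embL φ :=
      fun i hi => (Finset.mem_filter.mp hi).2
    have hScspec : ∀ i, i ∉ S → ∃ ψ, ψ ∈ B₂ ∧ G i = embR ψ := by
      intro i hi
      rcases hchoice i with h | h
      · exact absurd (Finset.mem_filter.mpr ⟨Finset.mem_univ i, h⟩) hi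
      · exact h
    have hz1 : ∀ i ∈ S, ∀ l, l ∉ C → M i l = 0 := by
      intro i hi l hl
      obtain ⟨φ, hφ, hGe⟩ := hSspec i hi
      have hge : m₁ ≤ (jc l : ℕ) := by
        by_contra h
        exact hl (Finset.mem_filter.mpr ⟨Finset.mem_univ l, by omega⟩)
      have hlt2 : (jc l : ℕ) - m₁ < m₂ := by
        have := (jc l).isLt
        omega
      have hnat : jc l = Fin.natAdd m₁ ⟨(jc l : ℕ) - m₁, hlt2⟩ := by
        apply Fin.ext
        simp only [Fin.coe_natAdd]
        omega
      show π (pd (jc l) (G i)) = 0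
      rw [hGe, hnat, pd_natAdd_embL, map_zero]
    have hz2 : ∀ i, i ∉ S → ∀ l ∈ C, M i l = 0 := by
      intro i hi l hl
      obtain ⟨ψ, hψ, hGe⟩ := hScspec i hi
      have hlt : (jc l : ℕ) < m₁ := (Finset.mem_filter.mp hl).2
      have hcast : jc l = Fin.castAdd m₂ ⟨(jc l : ℕ), hlt⟩ := by
        apply Fin.ext
        rfl
      show π (pd (jc l) (G i)) = 0
      rw [hGe, hcast, pd_castAdd_embR, map_zero]
    rcases lt_trichotomy C.card S.card with hlt | heq | hgt
    · exact det_eq_zero_of_rect_block M S C hz1 hlt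
    · by_cases hbig : r₁ + 1 ≤ S.card
      · refine det_eq_zero_of_block_zero M S C rfl heq hz1 hz2 (Or.inl ?_)
        have hcol : ∀ l : Fin S.card, ((jc ((C.orderIsoOfFin heq l : Fin k))) : ℕ) < m₁ :=
          fun l => (Finset.mem_filter.mp (C.orderIsoOfFin heq l).2).2
        set cIdx : Fin S.card → Fin m₁ :=
          fun l => ⟨(jc ((C.orderIsoOfFin heq l : Fin k)) : ℕ), hcol l⟩ with hcIdx
        have hcmono : StrictMono cIdx := by
          intro a b hab
          have h1 : ((C.orderIsoOfFin heq a : Fin k)) < ((C.orderIsoOfFin heq b : Fin k)) :=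
            Subtype.coe_lt_coe.mpr ((C.orderIsoOfFin heq).strictMono hab)
          have h2 := hjc h1
          rw [Fin.lt_def] at h2 ⊢
          exact h2
        set Φ : Fin S.card → Amod m₁ :=
          fun i => Classical.choose (hSspec (S.orderIsoOfFin rfl i : Fin k)
            (S.orderIsoOfFin rfl i).2) with hΦ
        have hΦspec : ∀ i, Φ i ∈ B₁ ∧ G (S.orderIsoOfFin rfl i : Fin k) = embL (Φ i) :=
          fun i => Classical.choose_spec (hSspec (S.orderIsoOfFin rfl i : Fin k)
            (S.orderIsoOfFin rfl i).2)
        have hA : (Matrix.of fun (i l : Fin S.card) =>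
              M ((S.orderIsoOfFin rfl i : Fin k)) ((C.orderIsoOfFin heq l : Fin k)))
            = (π.comp (embLh m₁ m₂)).mapMatrix (Matrix.of fun i l => pd (cIdx l) (Φ i)) := by
          apply Matrix.ext
          intro i l
          show π (pd (jc ((C.orderIsoOfFin heq l : Fin k))) (G (S.orderIsoOfFin rfl i : Fin k)))
            = π (embL (pd (cIdx l) (Φ i)))
          rw [(hΦspec i).2]
          have hcst : jc ((C.orderIsoOfFin heq l : Fin k)) = Fin.castAdd m₂ (cIdx l) := by
            apply Fin.ext
            rfl
          rw [hcst, pd_castAdd_embL]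
        rw [hA, ← RingHom.map_det, RingHom.comp_apply]
        rw [show (Ideal.Quotient.mk R) ((embLh m₁ m₂) (Matrix.det (Matrix.of fun i l => pd (cIdx l) (Φ i)))) = 0
            ↔ (embLh m₁ m₂) (Matrix.det (Matrix.of fun i l => pd (cIdx l) (Φ i))) ∈ R
          from Ideal.Quotient.eq_zero_iff_mem]
        apply hI1R
        have hmem := minor_mem_span_minors B₁ S.card hbig Φ cIdx (fun i => (hΦspec i).1) hcmono
        have hmap := Ideal.mem_map_of_mem (embLh m₁ m₂) hmem
        rw [Ideal.map_span] at hmap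
        have hco : (⇑(embLh m₁ m₂) '' minorSet m₁ (r₁ + 1) B₁)
            = embL '' minorSet m₁ (r₁ + 1) B₁ := rfl
        rw [hco] at hmap
        exact hmap
      · have hSk : S.card ≤ k := by
          have := Finset.card_le_univ S
          simpa using this
        have hbig2 : r₂ + 1 ≤ k - S.card := by omega
        refine det_eq_zero_of_block_zero M S C rfl heq hz1 hz2 (Or.inr ?_)
        have hcolc : ∀ l : Fin (k - S.card),
            m₁ ≤ ((jc ((Cᶜ.orderIsoOfFin (card_compl_eq C heq) l : Fin k))) : ℕ) := by
          intro l
          have hnc : ((Cᶜ.orderIsoOfFin (card_compl_eq C heq) l : Fin k)) ∉ C :=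
            Finset.mem_compl.mp (Cᶜ.orderIsoOfFin (card_compl_eq C heq) l).2
          by_contra h
          exact hnc (Finset.mem_filter.mpr ⟨Finset.mem_univ _, by omega⟩)
        have hltc : ∀ l : Fin (k - S.card),
            ((jc ((Cᶜ.orderIsoOfFin (card_compl_eq C heq) l : Fin k))) : ℕ) - m₁ < m₂ := by
          intro l
          have := (jc ((Cᶜ.orderIsoOfFin (card_compl_eq C heq) l : Fin k))).isLt
          have := hcolc l
          omega
        set dIdx : Fin (k - S.card) → Fin m₂ :=
          fun l => ⟨((jc ((Cᶜ.orderIsoOfFin (card_compl_eq C heq) l : Fin k))) : ℕ) - m₁,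
            hltc l⟩ with hdIdx
        have hdmono : StrictMono dIdx := by
          intro a b hab
          have h1 : ((Cᶜ.orderIsoOfFin (card_compl_eq C heq) a : Fin k))
              < ((Cᶜ.orderIsoOfFin (card_compl_eq C heq) b : Fin k)) :=
            Subtype.coe_lt_coe.mpr ((Cᶜ.orderIsoOfFin (card_compl_eq C heq)).strictMono hab)
          have h2 := hjc h1
          rw [Fin.lt_def] at h2 ⊢
          have := hcolc a
          have := hcolc b
          simp only [hdIdx]
          omega
        set Ψ : Fin (k - S.card) → Amod m₂ :=
          fun i => Classical.choose (hScspec (Sᶜ.orderIsoOfFin (card_compl_eq S rfl) i : Fin k)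
            (Finset.mem_compl.mp (Sᶜ.orderIsoOfFin (card_compl_eq S rfl) i).2)) with hΨ
        have hΨspec : ∀ i, Ψ i ∈ B₂ ∧
            G (Sᶜ.orderIsoOfFin (card_compl_eq S rfl) i : Fin k) = embR (Ψ i) :=
          fun i => Classical.choose_spec (hScspec (Sᶜ.orderIsoOfFin (card_compl_eq S rfl) i : Fin k)
            (Finset.mem_compl.mp (Sᶜ.orderIsoOfFin (card_compl_eq S rfl) i).2))
        have hD : (Matrix.of fun (i l : Fin (k - S.card)) =>
              M ((Sᶜ.orderIsoOfFin (card_compl_eq S rfl) i : Fin k))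
                ((Cᶜ.orderIsoOfFin (card_compl_eq C heq) l : Fin k)))
            = (π.comp (embRh m₁ m₂)).mapMatrix (Matrix.of fun i l => pd (dIdx l) (Ψ i)) := by
          apply Matrix.ext
          intro i l
          show π (pd (jc ((Cᶜ.orderIsoOfFin (card_compl_eq C heq) l : Fin k)))
              (G (Sᶜ.orderIsoOfFin (card_compl_eq S rfl) i : Fin k)))
            = π (embR (pd (dIdx l) (Ψ i)))
          rw [(hΨspec i).2]
          have hnst : jc ((Cᶜ.orderIsoOfFin (card_compl_eq C heq) l : Fin k))
              = Fin.natAdd m₁ (dIdx l) := by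
            apply Fin.ext
            simp only [Fin.coe_natAdd, hdIdx]
            have := hcolc l
            omega
          rw [hnst, pd_natAdd_embR]
        rw [hD, ← RingHom.map_det, RingHom.comp_apply]
        rw [show (Ideal.Quotient.mk R) ((embRh m₁ m₂) (Matrix.det (Matrix.of fun i l => pd (dIdx l) (Ψ i)))) = 0
            ↔ (embRh m₁ m₂) (Matrix.det (Matrix.of fun i l => pd (dIdx l) (Ψ i))) ∈ R
          from Ideal.Quotient.eq_zero_iff_mem]
        apply hI2R
        have hmem := minor_mem_span_minors B₂ (k - S.card) hbig2 Ψ dIdx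
          (fun i => (hΨspec i).1) hdmono
        have hmap := Ideal.mem_map_of_mem (embRh m₁ m₂) hmem
        rw [Ideal.map_span] at hmap
        have hco : (⇑(embRh m₁ m₂) '' minorSet m₂ (r₂ + 1) B₂)
            = embR '' minorSet m₂ (r₂ + 1) B₂ := rfl
        rw [hco] at hmap
        exact hmap
    · have h1 : ∀ i ∈ Sᶜ, ∀ l, l ∉ Cᶜ → M i l = 0 := by
        intro i hi l hl
        refine hz2 i (Finset.mem_compl.mp hi) l ?_
        by_contra h
        exact hl (Finset.mem_compl.mpr h)
      have hcards : Cᶜ.card < Sᶜ.card := by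
        rw [card_compl_eq C rfl, card_compl_eq S rfl]
        have hCk : C.card ≤ k := by
          have := Finset.card_le_univ C
          simpa using this
        omega
      exact det_eq_zero_of_rect_block M Sᶜ Cᶜ h1 hcards
  -- Decompose each row of the actual matrix and expand by multilinearity.
  have hdec : ∀ i, ∃ n : ℕ, ∃ f : Fin n → Amod (m₁ + m₂),
      ∃ g : Fin n → (embL '' (B₁ : Set (Amod m₁)) ∪ embR '' (B₂ : Set (Amod m₂)) : Set _),
      ∑ a, f a • (g a : Amod (m₁ + m₂)) = θ i :=
    fun i => Submodule.mem_span_set'.mp (hθ i)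
  choose n f g hsum using hdec
  set v : Fin k → ℕ → (Fin k → Amod (m₁ + m₂) ⧸ R) := fun i a =>
    if h : a < n i then
      π (f i ⟨a, h⟩) • fun l => π (pd (jc l) ((g i ⟨a, h⟩ : Amod (m₁ + m₂))))
    else 0 with hv
  have hgmem : ∀ i (a : Fin (n i)), π ((g i a : Amod (m₁ + m₂))) = 0 := by
    intro i a
    rw [hπ]
    rw [Ideal.Quotient.eq_zero_iff_mem]
    exact hNR (Ideal.subset_span (g i a).2)
  have hrows : ∀ i, (fun l => π (pd (jc l) (θ i))) = ∑ a ∈ Finset.range (n i), v i a := by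
    intro i
    funext l
    rw [Finset.sum_apply]
    have hθi : θ i = ∑ a, f i a * (g i a : Amod (m₁ + m₂)) := by
      rw [← hsum i]
      rfl
    rw [hθi, pd_sum, map_sum, ← Fin.sum_univ_eq_sum_range (fun a => v i a l) (n i)]
    refine Finset.sum_congr rfl fun a _ => ?_
    rw [pd_mul, map_add, map_mul, map_mul, hgmem i a, mul_zero, zero_add]
    have hva : v i (a : ℕ) = π (f i a) • fun l => π (pd (jc l) ((g i a : Amod (m₁ + m₂)))) := by
      rw [hv]
      simp only
      rw [dif_pos a.isLt]
    rw [hva]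
    simp only [Pi.smul_apply, smul_eq_mul]
  have hM : (Matrix.of fun i l => π (pd (jc l) (θ i)))
      = Matrix.of fun i => ∑ a ∈ Finset.range (n i), v i a := by
    apply Matrix.ext
    intro i l
    exact congrFun (hrows i) l
  have hmain : Matrix.det (Matrix.of fun i l => π (pd (jc l) (θ i))) = 0 := by
    rw [hM]
    have hexp : Matrix.det (Matrix.of fun i => ∑ a ∈ Finset.range (n i), v i a)
        = ∑ rsel ∈ Fintype.piFinset (fun i => Finset.range (n i)),
            Matrix.det (Matrix.of fun i => v i (rsel i)) :=
      Matrix.detRowAlternating.toMultilinearMap.map_sum_finset v (fun i => Finset.range (n i))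
    rw [hexp]
    refine Finset.sum_eq_zero fun rsel hrsel => ?_
    have hrlt : ∀ i, rsel i < n i := by
      intro i
      have := (Fintype.mem_piFinset.mp hrsel) i
      exact Finset.mem_range.mp this
    have hterm : (fun i => v i (rsel i)) = fun i =>
        π (f i ⟨rsel i, hrlt i⟩) • fun l => π (pd (jc l) ((g i ⟨rsel i, hrlt i⟩ : Amod (m₁ + m₂)))) := by
      funext i
      rw [hv]
      simp only
      rw [dif_pos (hrlt i)]
    have hsmul : Matrix.det (Matrix.of fun i => v i (rsel i))
        = (∏ i, π (f i ⟨rsel i, hrlt i⟩)) •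
            Matrix.det (Matrix.of fun i l => π (pd (jc l) ((g i ⟨rsel i, hrlt i⟩ : Amod (m₁ + m₂))))) := by
      have : Matrix.det (Matrix.of fun i => v i (rsel i))
          = Matrix.detRowAlternating.toMultilinearMap
              (fun i => π (f i ⟨rsel i, hrlt i⟩) •
                fun l => π (pd (jc l) ((g i ⟨rsel i, hrlt i⟩ : Amod (m₁ + m₂))))) := by
        rw [show (Matrix.of fun i => v i (rsel i)) = (fun i => v i (rsel i)) from rfl, hterm]
        rfl
      rw [this, MultilinearMap.map_smul_univ]
      rfl
    rw [hsmul]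
    rw [hkey (fun i => (g i ⟨rsel i, hrlt i⟩ : Amod (m₁ + m₂))) (fun i => (g i ⟨rsel i, hrlt i⟩).2),
      smul_zero]
  rw [RingHom.map_det]
  have hMeq : (Ideal.Quotient.mk R).mapMatrix (Matrix.of fun i l => pd (jc l) (θ i))
      = Matrix.of fun i l => π (pd (jc l) (θ i)) := rfl
  rw [hMeq]
  exact hmain

end SubsetDir


section Final

variable {m m₁ m₂ : ℕ}

lemma jacExtUpper_corank_eq (B : Ideal (Amod m)) :
    jacExtUpper (corankIdeal B) B = jacExt (rankIdeal B + 1) B := by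
  unfold jacExtUpper corankIdeal
  congr 1
  have := rankIdeal_le B
  omega

lemma jacExtUpper_corank_ne_top {B : Ideal (Amod m)} (hB : B ≠ ⊤) :
    jacExtUpper (corankIdeal B) B ≠ ⊤ := by
  rw [jacExtUpper_corank_eq, jacExt_eq]
  set K : Ideal (Amod m) := RingHom.ker (MvPowerSeries.constantCoeff) with hK
  have hle : B ⊔ Ideal.span (minorSet m (rankIdeal B + 1) B) ≤ K := by
    refine sup_le ?_ ?_
    · intro x hx
      exact RingHom.mem_ker.mpr (constantCoeff_eq_zero_of_mem hB hx)
    · rw [Ideal.span_le]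
      rintro x ⟨φ, hφ, c, hc, rfl⟩
      rw [SetLike.mem_coe, hK, RingHom.mem_ker, constantCoeff_minor]
      apply det_eq_zero_of_rows_in_span (Dspan B) (by rw [← rankIdeal_eq]; omega)
      intro i
      exact Submodule.subset_span (Set.mem_image_of_mem _ (hφ i))
  intro htop
  rw [htop] at hle
  have h1 : (1 : Amod m) ∈ K := hle Submodule.mem_top
  rw [hK, RingHom.mem_ker, map_one] at h1
  exact one_ne_zero h1

lemma jacExtUpper_prodIdeal {B₁ : Ideal (Amod m₁)} {B₂ : Ideal (Amod m₂)}
    (h₁ : B₁ ≠ ⊤) (h₂ : B₂ ≠ ⊤) :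
    jacExtUpper (corankIdeal (prodIdeal B₁ B₂)) (prodIdeal B₁ B₂)
      = prodIdeal (jacExtUpper (corankIdeal B₁) B₁) (jacExtUpper (corankIdeal B₂) B₂) := by
  rw [jacExtUpper_corank_eq, jacExtUpper_corank_eq, jacExtUpper_corank_eq]
  rw [rank_prodIdeal h₁ h₂]
  rw [jacExt_eq, jacExt_eq, jacExt_eq]
  set r₁ := rankIdeal B₁ with hr₁
  set r₂ := rankIdeal B₂ with hr₂
  -- normal form of the right-hand side
  rw [prodIdeal_eq_sup (B₁ ⊔ Ideal.span (minorSet m₁ (r₁ + 1) B₁))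
    (B₂ ⊔ Ideal.span (minorSet m₂ (r₂ + 1) B₂)), Ideal.map_sup, Ideal.map_sup]
  rw [Ideal.map_span, Ideal.map_span]
  have hcoL : (⇑(embLh m₁ m₂) '' minorSet m₁ (r₁ + 1) B₁)
      = embL '' minorSet m₁ (r₁ + 1) B₁ := rfl
  have hcoR : (⇑(embRh m₁ m₂) '' minorSet m₂ (r₂ + 1) B₂)
      = embR '' minorSet m₂ (r₂ + 1) B₂ := rfl
  rw [hcoL, hcoR]
  have hNle : prodIdeal B₁ B₂ ≤ B₁.map (embLh m₁ m₂) ⊔ Ideal.span (embL '' minorSet m₁ (r₁ + 1) B₁)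
      ⊔ (B₂.map (embRh m₁ m₂) ⊔ Ideal.span (embR '' minorSet m₂ (r₂ + 1) B₂)) := by
    rw [prodIdeal_eq_sup B₁ B₂]
    refine sup_le ?_ ?_
    · exact le_trans le_sup_left le_sup_left
    · exact le_trans le_sup_left le_sup_right
  apply le_antisymm
  · refine sup_le hNle ?_
    rw [Ideal.span_le]
    rintro x ⟨θ, hθ, jcc, hjcc, rfl⟩
    have hmem := minor_prod_mem B₁ B₂ hr₁.symm hr₂.symm rfl θ hθ jcc hjcc
    have hle : prodIdeal B₁ B₂ ⊔ Ideal.span (embL '' minorSet m₁ (r₁ + 1) B₁)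
        ⊔ Ideal.span (embR '' minorSet m₂ (r₂ + 1) B₂)
        ≤ B₁.map (embLh m₁ m₂) ⊔ Ideal.span (embL '' minorSet m₁ (r₁ + 1) B₁)
          ⊔ (B₂.map (embRh m₁ m₂) ⊔ Ideal.span (embR '' minorSet m₂ (r₂ + 1) B₂)) := by
      refine sup_le (sup_le hNle ?_) ?_
      · exact le_trans le_sup_right le_sup_left
      · exact le_trans le_sup_right le_sup_right
    exact hle hmem
  · refine sup_le (sup_le ?_ ?_) (sup_le ?_ ?_)
    · refine le_trans ?_ le_sup_left
      rw [prodIdeal_eq_sup B₁ B₂]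
      exact le_sup_left
    · rw [Ideal.span_le]
      rintro x ⟨y, ⟨φ, hφ, c, hc, rfl⟩, rfl⟩
      have hmem := embL_minor_mem B₁ B₂ hr₂.symm φ hφ c hc
      have harith : (r₁ + 1) + r₂ = r₁ + r₂ + 1 := by omega
      rw [harith] at hmem
      exact Submodule.mem_sup_right hmem
    · refine le_trans ?_ le_sup_left
      rw [prodIdeal_eq_sup B₁ B₂]
      exact le_sup_right
    · rw [Ideal.span_le]
      rintro x ⟨y, ⟨ψ, hψ, d, hd, rfl⟩, rfl⟩
      have hmem := embR_minor_mem B₁ B₂ hr₁.symm ψ hψ d hd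
      have harith : r₁ + (r₂ + 1) = r₁ + r₂ + 1 := by omega
      rw [harith] at hmem
      exact Submodule.mem_sup_right hmem

end Final


/-- **Additivity of Thom–Boardman symbols under Cartesian product.** If `J₁ ⊆ 𝒜 m₁` and
`J₂ ⊆ 𝒜 m₂` are proper ideals, then `J₁ ⊞ J₂ ⊆ 𝒜 (m₁+m₂)` is proper and
`TB(J₁ ⊞ J₂)ₚ = TB(J₁)ₚ + TB(J₂)ₚ` for every `p`. -/
theorem tb_prodIdeal_add (m₁ m₂ : ℕ) (J₁ : Ideal (Amod m₁)) (J₂ : Ideal (Amod m₂))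
    (h₁ : J₁ ≠ ⊤) (h₂ : J₂ ≠ ⊤) :
    prodIdeal J₁ J₂ ≠ ⊤ ∧ ∀ p : ℕ, TB (prodIdeal J₁ J₂) p = TB J₁ p + TB J₂ p := by
  have key : ∀ p : ℕ, TBiter (prodIdeal J₁ J₂) p = prodIdeal (TBiter J₁ p) (TBiter J₂ p)
      ∧ TBiter J₁ p ≠ ⊤ ∧ TBiter J₂ p ≠ ⊤ := by
    intro p
    induction p with
    | zero => exact ⟨rfl, h₁, h₂⟩
    | succ q IH =>
      obtain ⟨hq, hq1, hq2⟩ := IH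
      refine ⟨?_, ?_, ?_⟩
      · show jacExtUpper (corankIdeal (TBiter (prodIdeal J₁ J₂) q)) (TBiter (prodIdeal J₁ J₂) q)
          = prodIdeal
              (jacExtUpper (corankIdeal (TBiter J₁ q)) (TBiter J₁ q))
              (jacExtUpper (corankIdeal (TBiter J₂ q)) (TBiter J₂ q))
        rw [hq]
        exact jacExtUpper_prodIdeal hq1 hq2
      · exact jacExtUpper_corank_ne_top hq1
      · exact jacExtUpper_corank_ne_top hq2
  refine ⟨prodIdeal_ne_top h₁ h₂, fun p => ?_⟩
  obtain ⟨hp, hp1, hp2⟩ := key p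
  show corankIdeal (TBiter (prodIdeal J₁ J₂) p)
      = corankIdeal (TBiter J₁ p) + corankIdeal (TBiter J₂ p)
  rw [hp]
  exact corank_prodIdeal hp1 hp2
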